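/- arXiv:1105.5530 — 8 statements merged into one kernel-verified Lean document; each statement's English description precedes it below -/
import Mathlib

section
/- Let m and N be positive integers with N ≥ 2, and define L_{-2m}(N) = 2^{2m} · N · Σ_{k=1}^{N-1} (sin(πk/N))^{2m}. Then L_{-2m}(N) = C(2m,m)·N² + 2N² · Σ_{k=1, N|k}^{m} (-1)^k · C(2m, m-k), where the sum runs over k with 1 ≤ k ≤ m divisible by N. -/
open Finset Real

lemma two_sin_pow (m : ℕ) (θ : ℝ) :
    ((2:ℂ) * (Real.sin θ : ℂ)) ^ (2*m) =
      ∑ j ∈ Finset.range (2*m+1),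
        (((2*m).choose j : ℂ)) * (-1:ℂ)^(m+j) *
          Complex.exp (2*((m:ℤ) - (j:ℤ)) * (θ:ℂ) * Complex.I) := by
  have h2 : (2:ℂ) * (Real.sin θ : ℂ) =
      Complex.I * Complex.exp (-(θ:ℂ) * Complex.I) +
        -(Complex.I * Complex.exp ((θ:ℂ) * Complex.I)) := by
    rw [Complex.ofReal_sin, Complex.sin]
    ring
  rw [h2, add_pow]
  refine Finset.sum_congr rfl fun j hj => ?_
  rw [Finset.mem_range] at hj
  have hj' : j ≤ 2*m := by omega
  have he : Complex.exp (-(θ:ℂ) * Complex.I) ^ j *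
      Complex.exp ((θ:ℂ) * Complex.I) ^ (2*m - j) =
      Complex.exp (2*((m:ℤ) - (j:ℤ)) * (θ:ℂ) * Complex.I) := by
    rw [← Complex.exp_nat_mul, ← Complex.exp_nat_mul, ← Complex.exp_add]
    congr 1
    push_cast [Nat.cast_sub hj']
    ring
  have hc : Complex.I ^ j * ((-1:ℂ)^(2*m - j) * Complex.I ^ (2*m - j)) =
      (-1:ℂ)^(m+j) := by
    have h1 : Complex.I ^ j * Complex.I ^ (2*m - j) = (-1:ℂ)^m := by
      rw [← pow_add, show j + (2*m - j) = 2*m by omega, pow_mul, Complex.I_sq]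
    have h3 : (-1:ℂ)^(2*m - j) * (-1:ℂ)^j = 1 := by
      rw [← pow_add, show 2*m - j + j = 2*m by omega, pow_mul]
      norm_num
    have h4 : (-1:ℂ)^(2*m - j) = (-1:ℂ)^j := by
      have : (-1:ℂ)^j * (-1:ℂ)^j = 1 := by
        rw [← pow_add, ← two_mul, pow_mul]; norm_num
      calc (-1:ℂ)^(2*m-j) = (-1:ℂ)^(2*m-j) * ((-1:ℂ)^j * (-1:ℂ)^j) := by rw [this, mul_one]
        _ = ((-1:ℂ)^(2*m-j) * (-1:ℂ)^j) * (-1:ℂ)^j := by ring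
        _ = (-1:ℂ)^j := by rw [h3, one_mul]
    rw [h4, pow_add]
    calc Complex.I^j * ((-1:ℂ)^j * Complex.I^(2*m-j))
        = (Complex.I^j * Complex.I^(2*m-j)) * (-1:ℂ)^j := by ring
      _ = (-1:ℂ)^m * (-1:ℂ)^j := by rw [h1]
  rw [neg_pow, mul_pow, mul_pow,
    show Complex.I ^ j * Complex.exp (-(θ:ℂ)*Complex.I) ^ j *
        ((-1:ℂ)^(2*m-j) * (Complex.I^(2*m-j) * Complex.exp ((θ:ℂ)*Complex.I)^(2*m-j))) *
        (((2*m).choose j : ℕ) : ℂ) =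
      (Complex.I ^ j * ((-1:ℂ)^(2*m-j) * Complex.I^(2*m-j))) *
        (Complex.exp (-(θ:ℂ)*Complex.I) ^ j * Complex.exp ((θ:ℂ)*Complex.I)^(2*m-j)) *
        (((2*m).choose j : ℕ) : ℂ) from by ring, hc, he]
  ring

lemma sum_exp_eq (N : ℕ) (hN : 0 < N) (d : ℤ) :
    ∑ k ∈ Finset.range N, Complex.exp (2*((d:ℂ)) * (Real.pi * k / N : ℝ) * Complex.I) =
      if (N:ℤ) ∣ d then (N:ℂ) else 0 := by
  set x : ℂ := Complex.exp (2 * Real.pi * Complex.I * d / N) with hx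
  have hterm : ∀ k ∈ Finset.range N,
      Complex.exp (2*((d:ℂ)) * (Real.pi * k / N : ℝ) * Complex.I) = x ^ k := by
    intro k _
    rw [hx, ← Complex.exp_nat_mul]
    congr 1
    have hN0 : (N:ℂ) ≠ 0 := Nat.cast_ne_zero.mpr hN.ne'
    push_cast
    field_simp
  rw [Finset.sum_congr rfl hterm]
  have hN0 : (N:ℂ) ≠ 0 := Nat.cast_ne_zero.mpr hN.ne'
  by_cases hdvd : (N:ℤ) ∣ d
  · obtain ⟨t, ht⟩ := hdvd
    have hx1 : x = 1 := by
      rw [hx, show 2 * (Real.pi:ℂ) * Complex.I * d / N = t * (2 * Real.pi * Complex.I) from by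
        rw [ht]; push_cast; field_simp]
      exact Complex.exp_int_mul_two_pi_mul_I t
    rw [if_pos ⟨t, ht⟩]
    simp [hx1]
  · rw [if_neg hdvd]
    have hxN : x ^ N = 1 := by
      rw [hx, ← Complex.exp_nat_mul,
        show (N:ℂ) * (2 * Real.pi * Complex.I * d / N) = d * (2 * Real.pi * Complex.I) from by
          field_simp]
      exact Complex.exp_int_mul_two_pi_mul_I d
    have hx1 : x ≠ 1 := by
      intro h
      rw [hx, Complex.exp_eq_one_iff] at h
      obtain ⟨n, hn⟩ := h
      apply hdvd
      have h2 : (2:ℂ) * Real.pi * Complex.I ≠ 0 := by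
        simp [Real.pi_ne_zero, Complex.I_ne_zero]
      rw [div_eq_iff hN0] at hn
      have hc : (2:ℂ) * Real.pi * Complex.I * (d:ℂ) =
          (2:ℂ) * Real.pi * Complex.I * ((N:ℂ) * n) := by linear_combination hn
      have hd : (d:ℂ) = (N:ℂ) * n := mul_left_cancel₀ h2 hc
      exact ⟨n, by exact_mod_cast hd⟩
    rw [geom_sum_eq hx1, hxN]
    simp

lemma neg_one_pow_two_mul_sub (R : Type*) [Monoid R] [HasDistribNeg R]
    (m k : ℕ) (h : k ≤ 2*m) : ((-1:R))^(2*m - k) = (-1:R)^k := by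
  have h3 : (-1:R)^(2*m - k) * (-1:R)^k = 1 := by
    rw [← pow_add, show 2*m - k + k = 2*m by omega, pow_mul, neg_one_sq, one_pow]
  have h5 : (-1:R)^k * (-1:R)^k = 1 := by
    rw [← pow_add, ← two_mul, pow_mul, neg_one_sq, one_pow]
  calc (-1:R)^(2*m-k) = (-1:R)^(2*m-k) * ((-1:R)^k * (-1:R)^k) := by rw [h5, mul_one]
    _ = ((-1:R)^(2*m-k) * (-1:R)^k) * (-1:R)^k := by rw [mul_assoc]
    _ = (-1:R)^k := by rw [h3, one_mul]

lemma reindex_sum (m N : ℕ) :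
    ∑ j ∈ Finset.range (2*m+1),
        (((2*m).choose j : ℂ)) * (-1:ℂ)^(m+j) *
          (if (N:ℤ) ∣ ((m:ℤ) - (j:ℤ)) then (N:ℂ) else 0) =
      (N:ℂ) * ((2*m).choose m : ℂ) +
        2 * N * ∑ k ∈ (Finset.Icc 1 m).filter (fun k => N ∣ k),
          (-1:ℂ)^k * ((2*m).choose (m-k) : ℂ) := by
  set f : ℕ → ℂ := fun j => (((2*m).choose j : ℂ)) * (-1:ℂ)^(m+j) *
      (if (N:ℤ) ∣ ((m:ℤ) - (j:ℤ)) then (N:ℂ) else 0) with hf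
  have hsplit : ∑ j ∈ Finset.range (2*m+1), f j =
      (∑ j ∈ Finset.range m, f j) + f m + ∑ j ∈ Finset.Ico (m+1) (2*m+1), f j := by
    rw [Finset.range_eq_Ico, ← Finset.sum_Ico_consecutive f (Nat.zero_le (m+1)) (by omega),
      ← Finset.range_eq_Ico, Finset.sum_range_succ]
  have hS : ∀ k ∈ Finset.Icc 1 m, (-1:ℂ)^k * ((2*m).choose (m-k) : ℂ) *
      (if N ∣ k then (N:ℂ) else 0) = (-1:ℂ)^k * ((2*m).choose (m-k) : ℂ) *
      (if N ∣ k then (N:ℂ) else 0) := fun _ _ => rfl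
  have hleft : ∑ j ∈ Finset.range m, f j =
      ∑ k ∈ Finset.Icc 1 m, (-1:ℂ)^k * ((2*m).choose (m-k) : ℂ) *
        (if N ∣ k then (N:ℂ) else 0) := by
    refine Finset.sum_nbij' (fun j => m - j) (fun k => m - k) ?_ ?_ ?_ ?_ ?_
    · intro j hj; rw [Finset.mem_range] at hj; rw [Finset.mem_Icc]; omega
    · intro k hk; rw [Finset.mem_Icc] at hk; rw [Finset.mem_range]; omega
    · intro j hj; rw [Finset.mem_range] at hj; omega
    · intro k hk; rw [Finset.mem_Icc] at hk; omega
    · intro j hj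
      rw [Finset.mem_range] at hj
      rw [hf]
      simp only
      have h1 : (m:ℤ) - (j:ℤ) = ((m - j : ℕ) : ℤ) := by omega
      have h2 : m + j = 2*m - (m - j) := by omega
      rw [h1]
      simp only [Int.natCast_dvd_natCast]
      rw [h2, neg_one_pow_two_mul_sub ℂ m (m-j) (by omega),
        show m - (m - j) = j by omega]
      ring
  have hright : ∑ j ∈ Finset.Ico (m+1) (2*m+1), f j =
      ∑ k ∈ Finset.Icc 1 m, (-1:ℂ)^k * ((2*m).choose (m-k) : ℂ) *
        (if N ∣ k then (N:ℂ) else 0) := by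
    refine Finset.sum_nbij' (fun j => j - m) (fun k => m + k) ?_ ?_ ?_ ?_ ?_
    · intro j hj; rw [Finset.mem_Ico] at hj; rw [Finset.mem_Icc]; omega
    · intro k hk; rw [Finset.mem_Icc] at hk; rw [Finset.mem_Ico]; omega
    · intro j hj; rw [Finset.mem_Ico] at hj; omega
    · intro k hk; rw [Finset.mem_Icc] at hk; omega
    · intro j hj
      rw [Finset.mem_Ico] at hj
      rw [hf]
      simp only
      have h1 : (m:ℤ) - (j:ℤ) = -((j - m : ℕ) : ℤ) := by omega
      have hch : (2*m).choose j = (2*m).choose (m - (j - m)) := by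
        rw [← Nat.choose_symm (show j ≤ 2*m by omega), show 2*m - j = m - (j-m) by omega]
      have h2 : (-1:ℂ)^(m+j) = (-1:ℂ)^(j-m) := by
        have : m + j = 2*m + (j - m) := by omega
        rw [this, pow_add, pow_mul, neg_one_sq, one_pow, one_mul]
      rw [h1]
      simp only [dvd_neg, Int.natCast_dvd_natCast]
      rw [hch, h2]
      ring
  have hm0 : f m = (N:ℂ) * ((2*m).choose m : ℂ) := by
    rw [hf]
    simp only [sub_self]
    rw [if_pos (dvd_zero _), show m + m = 2*m by ring, pow_mul, neg_one_sq, one_pow]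
    ring
  rw [hsplit, hleft, hright, hm0]
  have hfil : ∑ k ∈ Finset.Icc 1 m, (-1:ℂ)^k * ((2*m).choose (m-k) : ℂ) *
      (if N ∣ k then (N:ℂ) else 0) =
      (N:ℂ) * ∑ k ∈ (Finset.Icc 1 m).filter (fun k => N ∣ k),
        (-1:ℂ)^k * ((2*m).choose (m-k) : ℂ) := by
    rw [Finset.mul_sum, Finset.sum_filter]
    refine Finset.sum_congr rfl fun k _ => ?_
    by_cases h : N ∣ k <;> simp [h] <;> ring
  rw [hfil]
  ring

theorem riesz_neg_even_energy (m N : ℕ) (hm : 0 < m) (hN : 2 ≤ N) :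
    (2 : ℝ) ^ (2 * m) * N * ∑ k ∈ Finset.Icc 1 (N - 1),
        (Real.sin (Real.pi * k / N)) ^ (2 * m) =
      ((2 * m).choose m) * (N : ℝ) ^ 2 +
        2 * (N : ℝ) ^ 2 *
          ∑ k ∈ (Finset.Icc 1 m).filter (fun k => N ∣ k),
            (-1 : ℝ) ^ k * ((2 * m).choose (m - k)) := by
  rw [← Complex.ofReal_inj]
  push_cast
  have hcast : ∀ k:ℕ, Complex.sin ((Real.pi:ℂ) * k / N) =
      ((Real.sin (Real.pi * k / N) : ℝ) : ℂ) := by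
    intro k
    rw [Complex.ofReal_sin]
    congr 1
    push_cast
    ring
  simp only [hcast]
  -- step 1 : relate LHS to sum over range N of (2 sin)^(2m)
  have h1 : (2:ℂ) ^ (2*m) * (N:ℂ) * ∑ k ∈ Finset.Icc 1 (N-1),
      ((Real.sin (Real.pi * k / N) : ℝ) : ℂ) ^ (2*m) =
      (N:ℂ) * ∑ k ∈ Finset.range N, ((2:ℂ) * (Real.sin (Real.pi * k / N) : ℂ)) ^ (2*m) := by
    have hins : Finset.range N = insert 0 (Finset.Icc 1 (N-1)) := by
      ext x
      simp only [Finset.mem_range, Finset.mem_insert, Finset.mem_Icc]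
      omega
    rw [hins, Finset.sum_insert (by simp)]
    have h0 : ((2:ℂ) * (Real.sin (Real.pi * (0:ℕ) / N) : ℂ)) ^ (2*m) = 0 := by
      have hm2 : 2*m ≠ 0 := by omega
      simp [hm2]
    rw [h0, zero_add, Finset.mul_sum, Finset.mul_sum]
    refine Finset.sum_congr rfl fun k _ => ?_
    rw [mul_pow]
    ring
  rw [h1]
  have h2 : ∀ k ∈ Finset.range N, ((2:ℂ) * (Real.sin (Real.pi * k / N) : ℂ)) ^ (2*m) =
      ∑ j ∈ Finset.range (2*m+1),
        (((2*m).choose j : ℂ)) * (-1:ℂ)^(m+j) *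
          Complex.exp (2*(((m:ℤ) - (j:ℤ) : ℤ):ℂ) * ((Real.pi * k / N : ℝ):ℂ) * Complex.I) := by
    intro k _
    rw [two_sin_pow m (Real.pi * k / N)]
    refine Finset.sum_congr rfl fun j _ => ?_
    congr 2
    push_cast
    ring
  rw [Finset.sum_congr rfl h2, Finset.sum_comm]
  have h3 : ∀ j ∈ Finset.range (2*m+1),
      ∑ k ∈ Finset.range N, (((2*m).choose j : ℂ)) * (-1:ℂ)^(m+j) *
        Complex.exp (2*(((m:ℤ) - (j:ℤ) : ℤ):ℂ) * ((Real.pi * k / N : ℝ):ℂ) * Complex.I) =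
      (((2*m).choose j : ℂ)) * (-1:ℂ)^(m+j) *
        (if (N:ℤ) ∣ ((m:ℤ) - (j:ℤ)) then (N:ℂ) else 0) := by
    intro j _
    rw [← Finset.mul_sum, sum_exp_eq N (by omega) ((m:ℤ) - (j:ℤ))]
  rw [Finset.sum_congr rfl h3, reindex_sum m N]
  ring
end

section
/- For positive integers m and N ≥ 2 with N > m, one has 2^{2m} · N · Σ_{k=1}^{N-1} (sin(πk/N))^{2m} = C(2m,m) · N². -/
open Finset Real

lemma geom_zero {w : ℂ} {N : ℕ} (h1 : w ≠ 1) (hN : w ^ N = 1) :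
    ∑ k ∈ Finset.range N, w ^ k = 0 := by
  rw [geom_sum_eq h1, hN, sub_self, zero_div]

lemma per_term (m N k : ℕ) (hN : (N:ℂ) ≠ 0) :
    (2:ℂ) ^ (2*m) * (Complex.sin (Real.pi * k / N)) ^ (2*m)
    = ∑ j ∈ Finset.range (2*m+1), ((2*m).choose j : ℂ) * (-1)^(m+j)
        * Complex.exp ((((j:ℤ) - m) * k : ℤ) * (2 * Real.pi * Complex.I / N)) := by
  set c : ℂ := 2 * Real.pi * Complex.I / N with hc
  set z : ℂ := Complex.exp (Real.pi * k / N * Complex.I) with hz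
  have hz0 : z ≠ 0 := Complex.exp_ne_zero _
  have h20 : (2:ℂ) ≠ 0 := by norm_num
  have hsin : Complex.sin (Real.pi * k / N) = (z⁻¹ - z) * Complex.I / 2 := by
    rw [Complex.sin, hz, ← Complex.exp_neg, neg_mul]
  have hz2 : z ^ 2 = Complex.exp ((k:ℂ) * c) := by
    rw [hz, ← Complex.exp_nat_mul]
    congr 1
    rw [hc]
    push_cast
    field_simp
  have hEk : ∀ t : ℤ, (z ^ 2) ^ t = Complex.exp (((t * k : ℤ) : ℂ) * c) := by
    intro t
    rw [hz2, ← Complex.exp_int_mul]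
    congr 1
    push_cast
    ring
  have hI : Complex.I ^ (2*m) = (-1:ℂ)^m := by rw [pow_mul, Complex.I_sq]
  have e1 : z⁻¹ - z = z⁻¹ * (1 - z^2) := by field_simp
  calc (2:ℂ) ^ (2*m) * (Complex.sin (Real.pi * k / N)) ^ (2*m)
      = (-1)^m * ((z⁻¹ * (1 - z^2)) ^ (2*m)) := by
        rw [hsin, e1, div_pow, mul_pow, hI]
        rw [mul_div_assoc, mul_comm ((2:ℂ)^(2*m)), mul_assoc,
          div_mul_cancel₀ _ (pow_ne_zero _ h20)]
        ring
    _ = ∑ j ∈ Finset.range (2*m+1), ((2*m).choose j : ℂ) * (-1)^(m+j)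
        * Complex.exp ((((j:ℤ) - m) * k : ℤ) * c) := by
        rw [mul_pow, sub_eq_add_neg, add_comm, add_pow, Finset.mul_sum, Finset.mul_sum]
        apply Finset.sum_congr rfl
        intro j hj
        rw [← hEk ((j:ℤ) - m), zpow_sub₀ (pow_ne_zero 2 hz0), zpow_natCast, zpow_natCast]
        have h1 : (-z^2)^j = (-1:ℂ)^j * (z^2)^j := by ring
        have hinv : (z⁻¹)^(2*m) = ((z^2)^m)⁻¹ := by
          rw [inv_pow, ← pow_mul, mul_comm 2 m]
        have hzm : ((z:ℂ)^2)^m ≠ 0 := pow_ne_zero _ (pow_ne_zero _ hz0)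
        rw [h1, hinv]
        field_simp
        ring

lemma exp_inner_sum (N : ℕ) (hN : 0 < N) (t : ℤ) (ht0 : t ≠ 0) (ht : t.natAbs < N) :
    ∑ k ∈ Finset.range N, Complex.exp (((t * k : ℤ) : ℂ) * (2 * Real.pi * Complex.I / N)) = 0 := by
  have hNc : (N:ℂ) ≠ 0 := Nat.cast_ne_zero.2 hN.ne'
  set c : ℂ := 2 * Real.pi * Complex.I / N with hc
  set w : ℂ := Complex.exp ((t:ℂ) * c) with hw
  have hwk : ∀ k : ℕ, Complex.exp (((t * k : ℤ) : ℂ) * c) = w ^ k := by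
    intro k
    rw [hw, ← Complex.exp_nat_mul]
    congr 1
    push_cast
    ring
  have hwN : w ^ N = 1 := by
    rw [hw, ← Complex.exp_nat_mul]
    have : (N:ℂ) * ((t:ℂ) * c) = (t:ℂ) * (2 * Real.pi * Complex.I) := by
      rw [hc]; field_simp
    rw [this, Complex.exp_int_mul_two_pi_mul_I]
  have hw1 : w ≠ 1 := by
    intro h
    rw [hw, Complex.exp_eq_one_iff] at h
    obtain ⟨n, hn⟩ := h
    have hpi : (2 * (Real.pi:ℂ) * Complex.I) ≠ 0 := by
      simp [Real.pi_ne_zero, Complex.I_ne_zero]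
    rw [hc] at hn
    rw [div_eq_mul_inv, ← mul_assoc] at hn
    have hn2 : (t:ℂ) * (2 * Real.pi * Complex.I) = (n:ℂ) * N * (2 * Real.pi * Complex.I) := by
      field_simp at hn
      linear_combination (2 * (Real.pi:ℂ) * Complex.I) * hn
    have htc : (t:ℂ) = (n:ℂ) * N := mul_right_cancel₀ hpi hn2
    have htz : t = n * N := by exact_mod_cast htc
    have hNle : N ≤ t.natAbs := by
      rw [htz, Int.natAbs_mul, Int.natAbs_natCast]
      exact Nat.le_mul_of_pos_left N (Int.natAbs_pos.2 (by rintro rfl; simp at htz; omega))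
    omega
  calc ∑ k ∈ Finset.range N, Complex.exp (((t * k : ℤ) : ℂ) * c)
      = ∑ k ∈ Finset.range N, w ^ k := Finset.sum_congr rfl fun k _ => hwk k
    _ = 0 := geom_zero hw1 hwN

theorem riesz_neg_even_energy_large_N (m N : ℕ) (hm : 0 < m) (hN : 2 ≤ N) (hNm : m < N) :
    (2 : ℝ) ^ (2 * m) * N * ∑ k ∈ Finset.Icc 1 (N - 1),
        (Real.sin (Real.pi * k / N)) ^ (2 * m) =
      ((2 * m).choose m) * (N : ℝ) ^ 2 := by
  have hN0 : 0 < N := by omega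
  have hNc : (N:ℂ) ≠ 0 := Nat.cast_ne_zero.2 hN0.ne'
  set c : ℂ := 2 * Real.pi * Complex.I / N with hc
  have hmain : (2:ℂ) ^ (2*m) * ∑ k ∈ Finset.range N, (Complex.sin (Real.pi * k / N)) ^ (2*m)
      = ((2*m).choose m : ℂ) * N := by
    rw [Finset.mul_sum]
    rw [Finset.sum_congr rfl fun k _ => per_term m N k hNc]
    rw [Finset.sum_comm]
    have hinner : ∀ j ∈ Finset.range (2*m+1),
        ∑ k ∈ Finset.range N, ((2*m).choose j : ℂ) * (-1)^(m+j)
          * Complex.exp ((((j:ℤ) - m) * k : ℤ) * c)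
        = if j = m then ((2*m).choose m : ℂ) * (-1)^(m+m) * N else 0 := by
      intro j hj
      simp only [Finset.mem_range] at hj
      rw [← Finset.mul_sum]
      by_cases hjm : j = m
      · subst hjm
        simp [Finset.sum_const]
      · rw [if_neg hjm]
        have ht0 : ((j:ℤ) - m) ≠ 0 := by omega
        have htabs : ((j:ℤ) - m).natAbs < N := by omega
        rw [exp_inner_sum N hN0 _ ht0 htabs, mul_zero]
    rw [Finset.sum_congr rfl hinner]
    rw [Finset.sum_ite_eq' (Finset.range (2*m+1)) m]
    rw [if_pos (by simp; omega)]
    have h1 : ((-1:ℂ))^(m+m) = 1 := by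
      rw [← two_mul, pow_mul]; norm_num
    rw [h1, mul_one]
  have hIcc : Finset.Icc 1 (N-1) = Finset.Ico 1 N := by
    rw [← Finset.Ico_add_one_right_eq_Icc]
    congr 1
    omega
  have hsplit : ∑ k ∈ Finset.range N, (Complex.sin (Real.pi * k / N)) ^ (2*m)
      = ∑ k ∈ Finset.Ico 1 N, (Complex.sin (Real.pi * k / N)) ^ (2*m) := by
    rw [Finset.range_eq_Ico,
      ← Finset.sum_Ico_consecutive (fun k : ℕ => (Complex.sin (Real.pi * k / N)) ^ (2*m))
        (Nat.zero_le 1) (by omega : 1 ≤ N)]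
    have h0 : ∑ k ∈ Finset.Ico 0 1, (Complex.sin (Real.pi * (k:ℕ) / N)) ^ (2*m) = 0 := by
      have h2m : 2*m ≠ 0 := by omega
      simp [h2m]
    rw [h0, zero_add]
  have final : ((2 : ℝ) ^ (2 * m) * N * ∑ k ∈ Finset.Icc 1 (N - 1),
        (Real.sin (Real.pi * k / N)) ^ (2 * m) : ℂ)
      = ((((2 * m).choose m) * (N : ℝ) ^ 2 : ℝ) : ℂ) := by
    push_cast [Complex.ofReal_sin]
    rw [hIcc, ← hsplit]
    linear_combination (N:ℂ) * hmain
  exact_mod_cast final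
end

section
/- For every integer N ≥ 2, N · Σ_{k=1}^{N-1} (2 sin(πk/N))^{-2} = N³/12 - N/12. -/
open Finset Real

noncomputable section
namespace RieszAux

noncomputable def E (N : ℕ) (m : ℤ) : ℂ := Complex.exp (2 * Real.pi * Complex.I * m / N)

lemma E_add (N : ℕ) (a b : ℤ) : E N (a + b) = E N a * E N b := by
  rw [E, E, E, ← Complex.exp_add]
  congr 1
  push_cast
  ring

lemma E_pow (N : ℕ) (m : ℤ) (n : ℕ) : E N m ^ n = E N (n * m) := by
  rw [E, E, ← Complex.exp_nat_mul]
  congr 1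
  push_cast
  ring

lemma E_zero (N : ℕ) : E N 0 = 1 := by
  simp [E]

lemma E_N_mul (N : ℕ) (hN : N ≠ 0) (m : ℤ) : E N ((N : ℤ) * m) = 1 := by
  have hn : (N : ℂ) ≠ 0 := Nat.cast_ne_zero.mpr hN
  have h : (2 * (Real.pi : ℂ) * Complex.I * (((N : ℤ) * m : ℤ) : ℂ) / N)
      = (m : ℂ) * (2 * (Real.pi : ℂ) * Complex.I) := by
    field_simp
    push_cast
    ring
  rw [E, h, Complex.exp_int_mul_two_pi_mul_I]

lemma E_eq_one_iff (N : ℕ) (hN : N ≠ 0) (m : ℤ) : E N m = 1 ↔ (N : ℤ) ∣ m := by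
  have hn : (N : ℂ) ≠ 0 := Nat.cast_ne_zero.mpr hN
  have hpi : (Real.pi : ℂ) ≠ 0 := Complex.ofReal_ne_zero.mpr Real.pi_ne_zero
  constructor
  · intro h
    rw [E, Complex.exp_eq_one_iff] at h
    obtain ⟨n, hn2⟩ := h
    have h2 : (m : ℂ) = (n : ℂ) * N := by
      field_simp at hn2
      have h3 : (2 * (Real.pi : ℂ) * Complex.I) * (m : ℂ)
          = (2 * (Real.pi : ℂ) * Complex.I) * ((n : ℂ) * N) := by
        linear_combination (2 * (Real.pi : ℂ) * Complex.I) * hn2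
      exact mul_left_cancel₀ (by simp [hpi, Complex.I_ne_zero]) h3
    have : m = n * N := by exact_mod_cast h2
    exact ⟨n, by rw [this]; ring⟩
  · rintro ⟨c, rfl⟩
    exact E_N_mul N hN c

lemma sum_E (N : ℕ) (hN : N ≠ 0) (m : ℤ) :
    ∑ k ∈ range N, E N ((k : ℤ) * m) = if (N : ℤ) ∣ m then (N : ℂ) else 0 := by
  split_ifs with h
  · obtain ⟨c, rfl⟩ := h
    have : ∀ k ∈ range N, E N ((k : ℤ) * ((N : ℤ) * c)) = 1 := by
      intro k _
      have : (k : ℤ) * ((N : ℤ) * c) = (N : ℤ) * ((k : ℤ) * c) := by ring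
      rw [this, E_N_mul N hN]
    rw [Finset.sum_congr rfl this]
    simp
  · have h1 : E N m ≠ 1 := fun he => h ((E_eq_one_iff N hN m).mp he)
    have h2 : ∀ k ∈ range N, E N ((k : ℤ) * m) = (E N m) ^ k := by
      intro k _; rw [E_pow]
    rw [Finset.sum_congr rfl h2, geom_sum_eq h1, E_pow, E_N_mul N hN]
    simp

lemma key_sum (z : ℂ) (n : ℕ) :
    (z - 1) * ∑ j ∈ range n, (j : ℂ) * z ^ j
      = ((n : ℂ) - 1) * z ^ n - (∑ j ∈ range n, z ^ j) + 1 := by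
  induction n with
  | zero => simp
  | succ n ih =>
    rw [Finset.sum_range_succ, Finset.sum_range_succ (fun j => z ^ j)]
    push_cast
    linear_combination ih

lemma sumA (N : ℕ) (hN : N ≠ 0) (m : ℤ) (hm : ¬ (N : ℤ) ∣ m) :
    (E N m - 1) * ∑ j ∈ range N, (j : ℂ) * (E N m) ^ j = N := by
  have h1 : E N m ≠ 1 := fun he => hm ((E_eq_one_iff N hN m).mp he)
  have hNm : (E N m) ^ N = 1 := by rw [E_pow, E_N_mul N hN]
  have hg : ∑ j ∈ range N, (E N m) ^ j = 0 := by
    rw [geom_sum_eq h1, hNm]; simp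
  rw [key_sum, hNm, hg]
  ring

lemma quad (N k : ℕ) :
    (((2 * Real.sin (Real.pi * k / N)) ^ 2 : ℝ) : ℂ)
      = (E N k - 1) * (E N (-(k : ℤ)) - 1) := by
  set x : ℝ := Real.pi * k / N with hx
  have e1 : E N (k : ℤ) = Complex.exp ((2 * (x : ℂ)) * Complex.I) := by
    rw [E]; congr 1; push_cast [hx]; ring
  have e2 : E N (-(k : ℤ)) = Complex.exp ((-(2 * (x : ℂ))) * Complex.I) := by
    rw [E]; congr 1; push_cast [hx]; ring
  rw [e1, e2, Complex.exp_mul_I, Complex.exp_mul_I, Complex.cos_neg, Complex.sin_neg,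
    Complex.cos_two_mul, Complex.sin_two_mul]
  have h3 : Complex.sin (x:ℂ) ^ 2 + Complex.cos (x:ℂ) ^ 2 = 1 := Complex.sin_sq_add_cos_sq _
  push_cast [Complex.ofReal_sin]
  linear_combination (4 - 4 * Complex.cos (x:ℂ) ^ 2) * h3
    + 4 * Complex.sin (x:ℂ) ^ 2 * Complex.cos (x:ℂ) ^ 2 * Complex.I_sq

lemma per_k (N : ℕ) (hN : 2 ≤ N) (k : ℕ) (hk : k ∈ Finset.Icc 1 (N - 1)) :
    ((((2 * Real.sin (Real.pi * k / N)) ^ 2)⁻¹ : ℝ) : ℂ) * (N : ℂ) ^ 2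
      = (∑ j ∈ range N, (j : ℂ) * (E N k) ^ j)
        * (∑ l ∈ range N, (l : ℂ) * (E N (-(k : ℤ))) ^ l) := by
  have hN0 : N ≠ 0 := by omega
  rw [Finset.mem_Icc] at hk
  have hk1 : 1 ≤ k := hk.1
  have hk2 : k < N := by omega
  have hdvd : ¬ (N : ℤ) ∣ (k : ℤ) := by
    rw [Int.natCast_dvd_natCast]
    intro h
    have := Nat.le_of_dvd (by omega) h
    omega
  have hdvd' : ¬ (N : ℤ) ∣ (-(k : ℤ)) := by
    rwa [dvd_neg]
  have hA := sumA N hN0 (k : ℤ) hdvd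
  have hB := sumA N hN0 (-(k : ℤ)) hdvd'
  have hq := quad N k
  have hspos : 0 < Real.sin (Real.pi * k / N) := by
    apply Real.sin_pos_of_pos_of_lt_pi
    · positivity
    · rw [div_lt_iff₀ (by positivity)]
      have : (k : ℝ) < N := by exact_mod_cast hk2
      nlinarith [Real.pi_pos]
  have hne : ((2 * Real.sin (Real.pi * k / N)) ^ 2 : ℝ) ≠ 0 := by positivity
  have hne' : (E N k - 1) * (E N (-(k : ℤ)) - 1) ≠ 0 := by
    rw [← hq]
    exact_mod_cast Complex.ofReal_ne_zero.mpr hne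
  rw [Complex.ofReal_inv, hq]
  rw [inv_mul_eq_div, div_eq_iff hne']
  linear_combination (-(∑ l ∈ range N, (l : ℂ) * (E N (-(k : ℤ))) ^ l)
      * (E N (-(k : ℤ)) - 1)) * hA - (N : ℂ) * hB

lemma sum_E' (N : ℕ) (hN : 2 ≤ N) (m : ℤ) :
    ∑ k ∈ Finset.Icc 1 (N - 1), E N ((k : ℤ) * m)
      = (if (N : ℤ) ∣ m then (N : ℂ) else 0) - 1 := by
  have hN0 : N ≠ 0 := by omega
  have hr : range N = insert 0 (Finset.Icc 1 (N - 1)) := by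
    ext a
    simp only [Finset.mem_range, Finset.mem_insert, Finset.mem_Icc]
    omega
  have h0 : (0 : ℕ) ∉ Finset.Icc 1 (N - 1) := by simp
  have hs := sum_E N hN0 m
  rw [hr, Finset.sum_insert h0] at hs
  have h00 : E N ((0 : ℕ) * m) = 1 := by
    norm_num [E_zero]
  rw [h00] at hs
  linear_combination hs

lemma main_c (N : ℕ) (hN : 2 ≤ N) :
    (∑ k ∈ Finset.Icc 1 (N - 1),
        ((((2 * Real.sin (Real.pi * k / N)) ^ 2)⁻¹ : ℝ) : ℂ)) * (N : ℂ) ^ 2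
      = (N : ℂ) * ∑ j ∈ range N, (j : ℂ) ^ 2 - (∑ j ∈ range N, (j : ℂ)) ^ 2 := by
  have hN0 : N ≠ 0 := by omega
  rw [Finset.sum_mul]
  rw [Finset.sum_congr rfl (fun k hk => per_k N hN k hk)]
  have step1 : ∀ k ∈ Finset.Icc 1 (N - 1),
      (∑ j ∈ range N, (j : ℂ) * (E N k) ^ j)
          * (∑ l ∈ range N, (l : ℂ) * (E N (-(k : ℤ))) ^ l)
        = ∑ j ∈ range N, ∑ l ∈ range N,
            ((j : ℂ) * l) * E N ((k : ℤ) * ((j : ℤ) - (l : ℤ))) := by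
    intro k _
    rw [Finset.sum_mul_sum]
    refine Finset.sum_congr rfl fun j _ => Finset.sum_congr rfl fun l _ => ?_
    rw [E_pow, E_pow]
    have : (k : ℤ) * ((j : ℤ) - (l : ℤ)) = (j : ℤ) * (k : ℤ) + (l : ℤ) * (-(k : ℤ)) := by
      ring
    rw [this, E_add]
    ring
  rw [Finset.sum_congr rfl step1]
  rw [Finset.sum_comm]
  have step2 : ∀ j ∈ range N,
      (∑ k ∈ Finset.Icc 1 (N - 1), ∑ l ∈ range N,
          ((j : ℂ) * l) * E N ((k : ℤ) * ((j : ℤ) - (l : ℤ))))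
        = ∑ l ∈ range N, ((j : ℂ) * l) * ((if j = l then (N : ℂ) else 0) - 1) := by
    intro j hj
    rw [Finset.sum_comm]
    refine Finset.sum_congr rfl fun l hl => ?_
    rw [← Finset.mul_sum, sum_E' N hN]
    congr 2
    rw [Finset.mem_range] at hj hl
    by_cases h : j = l
    · simp [h]
    · rw [if_neg h, if_neg]
      intro hd
      have := Int.eq_zero_of_dvd_of_natAbs_lt_natAbs hd (by omega)
      omega
  rw [Finset.sum_congr rfl step2]
  have step3 : ∀ j ∈ range N,
      (∑ l ∈ range N, ((j : ℂ) * l) * ((if j = l then (N : ℂ) else 0) - 1))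
        = (N : ℂ) * (j : ℂ) ^ 2 - (j : ℂ) * ∑ l ∈ range N, (l : ℂ) := by
    intro j hj
    have expand : ∀ l ∈ range N,
        ((j : ℂ) * l) * ((if j = l then (N : ℂ) else 0) - 1)
          = (if j = l then ((j : ℂ) * l * N) else 0) - (j : ℂ) * l := by
      intro l _
      by_cases h : j = l <;> simp [h] <;> ring
    rw [Finset.sum_congr rfl expand, Finset.sum_sub_distrib,
      Finset.sum_ite_eq (range N) j (fun l => (j : ℂ) * l * N), if_pos hj,
      ← Finset.mul_sum]
    ring
  rw [Finset.sum_congr rfl step3, Finset.sum_sub_distrib, ← Finset.mul_sum,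
    ← Finset.sum_mul]
  ring

lemma sumP (n : ℕ) : (∑ j ∈ range n, (j : ℂ)) * 2 = (n : ℂ) * ((n : ℂ) - 1) := by
  induction n with
  | zero => simp
  | succ n ih =>
    rw [Finset.sum_range_succ]
    push_cast
    linear_combination ih

lemma sumQ (n : ℕ) :
    (∑ j ∈ range n, (j : ℂ) ^ 2) * 6 = (n : ℂ) * ((n : ℂ) - 1) * (2 * (n : ℂ) - 1) := by
  induction n with
  | zero => simp
  | succ n ih =>
    rw [Finset.sum_range_succ]
    push_cast
    linear_combination ih

end RieszAux
end

open RieszAux in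
theorem riesz_two_energy (N : ℕ) (hN : 2 ≤ N) :
    (N : ℝ) * ∑ k ∈ Finset.Icc 1 (N - 1),
        ((2 * Real.sin (Real.pi * k / N)) ^ 2)⁻¹ =
      (N : ℝ) ^ 3 / 12 - (N : ℝ) / 12 := by
  have hN0 : (N : ℂ) ≠ 0 := by
    simp; omega
  set S : ℝ := ∑ k ∈ Finset.Icc 1 (N - 1),
      ((2 * Real.sin (Real.pi * k / N)) ^ 2)⁻¹ with hS
  have main := main_c N hN
  have hcast : ((S : ℝ) : ℂ) = ∑ k ∈ Finset.Icc 1 (N - 1),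
      ((((2 * Real.sin (Real.pi * k / N)) ^ 2)⁻¹ : ℝ) : ℂ) := by
    rw [hS]
    push_cast
    rfl
  rw [← hcast] at main
  have hP := sumP N
  have hQ := sumQ N
  set P : ℂ := ∑ j ∈ range N, (j : ℂ) with hPdef
  set Q : ℂ := ∑ j ∈ range N, (j : ℂ) ^ 2 with hQdef
  have key : ((S : ℝ) : ℂ) * 12 * (N : ℂ) ^ 2 = ((N : ℂ) ^ 2 - 1) * (N : ℂ) ^ 2 := by
    linear_combination 12 * main + 2 * (N : ℂ) * hQ
      - 3 * (2 * P + (N : ℂ) * ((N : ℂ) - 1)) * hP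
  have key2 : ((S : ℝ) : ℂ) * 12 = (N : ℂ) ^ 2 - 1 :=
    mul_right_cancel₀ (pow_ne_zero 2 hN0) key
  have keyR : S * 12 = (N : ℝ) ^ 2 - 1 := by
    exact_mod_cast key2
  linear_combination ((N : ℝ) / 12) * keyR
end

section
/- For 0 ≤ r < 1 and an integer N ≥ 2, N · Σ_{k=1}^{N-1} (1 - 2r·cos(2πk/N) + r²)^{-1} = N²·(1 + r^N)/((1 - r²)(1 - r^N)) - N/(1-r)². -/
open Finset Real

private lemma key_sum (N : ℕ) (hN : 2 ≤ N) (ζ : ℂ) (hζ : IsPrimitiveRoot ζ N)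
    (r : ℝ) (hr0 : 0 ≤ r) (hr1 : r < 1) :
    ∑ k ∈ Finset.range N, (1 - (r : ℂ) * ζ ^ k)⁻¹ = N / (1 - (r : ℂ) ^ N) := by
  have hNz : (N : ℕ) ≠ 0 := by omega
  have hζabs : ‖ζ‖ = 1 := by
    have h1 : ‖ζ‖ ^ N = 1 := by
      rw [← norm_pow, hζ.pow_eq_one, norm_one]
    rcases lt_trichotomy ‖ζ‖ 1 with h | h | h
    · have := pow_lt_one₀ (norm_nonneg ζ) h hNz; linarith
    · exact h
    · have := one_lt_pow₀ h hNz; linarith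
  have hne : ∀ k : ℕ, (1 : ℂ) - (r : ℂ) * ζ ^ k ≠ 0 := by
    intro k h
    have : ‖(r : ℂ) * ζ ^ k‖ = r := by
      rw [norm_mul, norm_pow, hζabs, one_pow, mul_one, Complex.norm_of_nonneg hr0]
    have h1 : (r : ℂ) * ζ ^ k = 1 := by linear_combination -h
    rw [h1, norm_one] at this
    linarith
  have hrN : (1 : ℂ) - (r : ℂ) ^ N ≠ 0 := by
    have : r ^ N < 1 := pow_lt_one₀ hr0 hr1 hNz
    intro h
    have h2 : ((1 - r ^ N : ℝ) : ℂ) = 0 := by push_cast; linear_combination h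
    have := Complex.ofReal_eq_zero.mp h2
    linarith
  have hstep : ∀ k : ℕ, (1 - (r : ℂ) * ζ ^ k)⁻¹
      = (∑ j ∈ Finset.range N, ((r : ℂ) * ζ ^ k) ^ j) / (1 - (r : ℂ) ^ N) := by
    intro k
    have hx : ((r : ℂ) * ζ ^ k) ^ N = (r : ℂ) ^ N := by
      rw [mul_pow, ← pow_mul, mul_comm k N, pow_mul, hζ.pow_eq_one, one_pow, mul_one]
    have hg := geom_sum_mul ((r : ℂ) * ζ ^ k) N
    rw [hx] at hg
    have hgeom : (∑ j ∈ Finset.range N, ((r : ℂ) * ζ ^ k) ^ j) * (1 - (r : ℂ) * ζ ^ k)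
        = 1 - (r : ℂ) ^ N := by linear_combination -hg
    rw [eq_div_iff hrN, ← hgeom, mul_comm, mul_assoc, mul_inv_cancel₀ (hne k), mul_one]
  calc ∑ k ∈ Finset.range N, (1 - (r : ℂ) * ζ ^ k)⁻¹
      = (∑ k ∈ Finset.range N, ∑ j ∈ Finset.range N, ((r : ℂ) * ζ ^ k) ^ j)
          / (1 - (r : ℂ) ^ N) := by
        rw [Finset.sum_div]; exact Finset.sum_congr rfl fun k _ => hstep k
    _ = (∑ j ∈ Finset.range N, (r : ℂ) ^ j * ∑ k ∈ Finset.range N, (ζ ^ j) ^ k)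
          / (1 - (r : ℂ) ^ N) := by
        rw [Finset.sum_comm]
        congr 1
        refine Finset.sum_congr rfl fun j _ => ?_
        rw [Finset.mul_sum]
        refine Finset.sum_congr rfl fun k _ => ?_
        rw [mul_pow, ← pow_mul, ← pow_mul, mul_comm j k]
    _ = (N : ℂ) / (1 - (r : ℂ) ^ N) := by
        congr 1
        rw [Finset.sum_eq_single 0]
        · simp
        · intro j hj hj0
          have hj1 : 0 < j := Nat.pos_of_ne_zero hj0
          have hjN : j < N := Finset.mem_range.mp hj
          have hz1 : ζ ^ j ≠ 1 := hζ.pow_ne_one_of_pos_of_lt hj0 hjN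
          have hg := geom_sum_mul (ζ ^ j) N
          have hzN : (ζ ^ j) ^ N = 1 := by
            rw [← pow_mul, mul_comm j N, pow_mul, hζ.pow_eq_one, one_pow]
          rw [hzN, sub_self] at hg
          have : ∑ k ∈ Finset.range N, (ζ ^ j) ^ k = 0 := by
            rcases mul_eq_zero.mp hg with h | h
            · exact h
            · exact absurd (by linear_combination h) hz1
          rw [this, mul_zero]
        · intro h; exact absurd (Finset.mem_range.mpr (by omega)) h

private lemma abs_one_of_primitive {N : ℕ} (hNz : N ≠ 0) {ζ : ℂ}
    (hζ : IsPrimitiveRoot ζ N) : ‖ζ‖ = 1 := by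
  have h1 : ‖ζ‖ ^ N = 1 := by rw [← norm_pow, hζ.pow_eq_one, norm_one]
  rcases lt_trichotomy ‖ζ‖ 1 with h | h | h
  · have := pow_lt_one₀ (norm_nonneg ζ) h hNz; linarith
  · exact h
  · have := one_lt_pow₀ h hNz; linarith

private lemma one_sub_mul_ne {r : ℝ} (hr0 : 0 ≤ r) (hr1 : r < 1) {z : ℂ}
    (hz : ‖z‖ = 1) : (1 : ℂ) - (r : ℂ) * z ≠ 0 := by
  intro h
  have h1 : (r : ℂ) * z = 1 := by linear_combination -h
  have : ‖(r : ℂ) * z‖ = r := by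
    rw [norm_mul, hz, mul_one, Complex.norm_of_nonneg hr0]
  rw [h1, norm_one] at this
  linarith

private lemma pf_aux (s a b : ℂ) (hab : a * b = s ^ 2) (hA : (1:ℂ) - a ≠ 0)
    (hB : (1:ℂ) - b ≠ 0) (h2 : (1:ℂ) - s ^ 2 ≠ 0) :
    ((1 - a) * (1 - b))⁻¹ = ((1 - a)⁻¹ + (1 - b)⁻¹ - 1) / (1 - s ^ 2) := by
  field_simp
  linear_combination hab

theorem modified_two_energy (N : ℕ) (hN : 2 ≤ N) (r : ℝ) (hr0 : 0 ≤ r) (hr1 : r < 1) :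
    (N : ℝ) * ∑ k ∈ Finset.Icc 1 (N - 1),
        (1 - 2 * r * Real.cos (2 * Real.pi * k / N) + r ^ 2)⁻¹ =
      (N : ℝ) ^ 2 * (1 + r ^ N) / ((1 - r ^ 2) * (1 - r ^ N)) -
        (N : ℝ) / (1 - r) ^ 2 := by
  have hNz : N ≠ 0 := by omega
  have hN0 : (N : ℂ) ≠ 0 := Nat.cast_ne_zero.mpr hNz
  set ω : ℂ := Complex.exp (2 * (Real.pi : ℂ) * Complex.I / N) with hω
  have hζ : IsPrimitiveRoot ω N := Complex.isPrimitiveRoot_exp N hNz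
  have habsω : ‖ω‖ = 1 := abs_one_of_primitive hNz hζ
  have habsωk : ∀ k : ℕ, ‖ω ^ k‖ = 1 := fun k => by
    rw [norm_pow, habsω, one_pow]
  have habsωik : ∀ k : ℕ, ‖(ω⁻¹) ^ k‖ = 1 := fun k => by
    rw [norm_pow, norm_inv, habsω, inv_one, one_pow]
  have key1 := key_sum N hN ω hζ r hr0 hr1
  have key2 := key_sum N hN ω⁻¹ hζ.inv r hr0 hr1
  -- nonzero denominators
  have h1r : (1 : ℝ) - r ≠ 0 := by linarith
  have h2r : (1 : ℝ) - r ^ 2 ≠ 0 := by nlinarith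
  have hNr : (1 : ℝ) - r ^ N ≠ 0 := by
    have : r ^ N < 1 := pow_lt_one₀ hr0 hr1 hNz
    linarith
  have h2c : (1 : ℂ) - (r : ℂ) ^ 2 ≠ 0 := by
    intro h
    have h2 : ((1 - r ^ 2 : ℝ) : ℂ) = 0 := by push_cast; linear_combination h
    exact h2r (Complex.ofReal_eq_zero.mp h2)
  have hNc : (1 : ℂ) - (r : ℂ) ^ N ≠ 0 := by
    intro h
    have h2 : ((1 - r ^ N : ℝ) : ℂ) = 0 := by push_cast; linear_combination h
    exact hNr (Complex.ofReal_eq_zero.mp h2)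
  -- term identity
  have hωne : ∀ k : ℕ, ω ^ k ≠ 0 := fun k h => by
    have h1 := habsωk k
    rw [h, norm_zero] at h1
    exact one_ne_zero h1.symm
  have hterm : ∀ k : ℕ, ((1 - 2 * r * Real.cos (2 * Real.pi * k / N) + r ^ 2 : ℝ) : ℂ)
      = (1 - (r : ℂ) * ω ^ k) * (1 - (r : ℂ) * (ω⁻¹) ^ k) := by
    intro k
    set u : ℝ := 2 * Real.pi * k / N with hu
    have h1 : ω ^ k = Complex.exp ((u : ℂ) * Complex.I) := by
      rw [hω, ← Complex.exp_nat_mul]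
      congr 1
      rw [hu]
      push_cast
      field_simp
    have h2 : (ω⁻¹) ^ k = Complex.exp (-((u : ℂ) * Complex.I)) := by
      rw [inv_pow, h1, ← Complex.exp_neg]
    have hc := Complex.two_cos (u : ℂ)
    rw [neg_mul] at hc
    have hmul : Complex.exp ((u : ℂ) * Complex.I) * Complex.exp (-((u : ℂ) * Complex.I)) = 1 := by
      rw [← Complex.exp_add]; simp
    push_cast [Complex.ofReal_cos]
    rw [h1, h2]
    linear_combination (-(r : ℂ)) * hc - (r : ℂ) ^ 2 * hmul
  -- partial fractions per term
  have hA : ∀ k : ℕ, (1 : ℂ) - (r : ℂ) * ω ^ k ≠ 0 := fun k =>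
    one_sub_mul_ne hr0 hr1 (habsωk k)
  have hB : ∀ k : ℕ, (1 : ℂ) - (r : ℂ) * (ω⁻¹) ^ k ≠ 0 := fun k =>
    one_sub_mul_ne hr0 hr1 (habsωik k)
  have hpf : ∀ k : ℕ, ((1 - (r : ℂ) * ω ^ k) * (1 - (r : ℂ) * (ω⁻¹) ^ k))⁻¹
      = ((1 - (r : ℂ) * ω ^ k)⁻¹ + (1 - (r : ℂ) * (ω⁻¹) ^ k)⁻¹ - 1) / (1 - (r : ℂ) ^ 2) := by
    intro k
    have hab : (r : ℂ) * ω ^ k * ((r : ℂ) * (ω⁻¹) ^ k) = (r : ℂ) ^ 2 := by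
      rw [inv_pow]
      field_simp [hωne k]
    exact pf_aux _ _ _ hab (hA k) (hB k) h2c
  -- full sum over range N
  have hSfull : ∑ k ∈ Finset.range N, (1 - 2 * r * Real.cos (2 * Real.pi * k / N) + r ^ 2)⁻¹
      = N * (1 + r ^ N) / ((1 - r ^ 2) * (1 - r ^ N)) := by
    apply Complex.ofReal_injective
    rw [Complex.ofReal_sum]
    simp only [Complex.ofReal_inv]
    calc ∑ k ∈ Finset.range N, (((1 - 2 * r * Real.cos (2 * Real.pi * k / N) + r ^ 2 : ℝ) : ℂ))⁻¹
        = ∑ k ∈ Finset.range N, (((1 - (r : ℂ) * ω ^ k)⁻¹ + (1 - (r : ℂ) * (ω⁻¹) ^ k)⁻¹ - 1)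
            / (1 - (r : ℂ) ^ 2)) := by
          refine Finset.sum_congr rfl fun k _ => ?_
          rw [hterm k, hpf k]
      _ = ((∑ k ∈ Finset.range N, (1 - (r : ℂ) * ω ^ k)⁻¹)
            + (∑ k ∈ Finset.range N, (1 - (r : ℂ) * (ω⁻¹) ^ k)⁻¹) - N) / (1 - (r : ℂ) ^ 2) := by
          rw [← Finset.sum_div, Finset.sum_sub_distrib, Finset.sum_add_distrib,
            Finset.sum_const, Finset.card_range, nsmul_eq_mul, mul_one]
      _ = ((N : ℂ) * (1 + (r : ℂ) ^ N)) / ((1 - (r : ℂ) ^ 2) * (1 - (r : ℂ) ^ N)) := by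
          rw [key1, key2]
          field_simp
          ring
      _ = ((N * (1 + r ^ N) / ((1 - r ^ 2) * (1 - r ^ N)) : ℝ) : ℂ) := by
          push_cast
          ring
  -- split off k = 0
  have hIcc : Finset.Icc 1 (N - 1) = Finset.Ico 1 N := by
    rw [← Finset.Ico_add_one_right_eq_Icc]
    congr 1
    omega
  have hsplit : ∑ k ∈ Finset.range N, (1 - 2 * r * Real.cos (2 * Real.pi * k / N) + r ^ 2)⁻¹
      = (1 - 2 * r * Real.cos (2 * Real.pi * (0 : ℕ) / N) + r ^ 2)⁻¹
        + ∑ k ∈ Finset.Icc 1 (N - 1), (1 - 2 * r * Real.cos (2 * Real.pi * k / N) + r ^ 2)⁻¹ := by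
    rw [hIcc, Finset.range_eq_Ico]
    exact Finset.sum_eq_sum_Ico_succ_bot (by omega) _
  have hzero : (1 - 2 * r * Real.cos (2 * Real.pi * (0 : ℕ) / N) + r ^ 2)⁻¹ = ((1 - r) ^ 2)⁻¹ := by
    norm_num
    ring_nf
  have hS : ∑ k ∈ Finset.Icc 1 (N - 1), (1 - 2 * r * Real.cos (2 * Real.pi * k / N) + r ^ 2)⁻¹
      = N * (1 + r ^ N) / ((1 - r ^ 2) * (1 - r ^ N)) - ((1 - r) ^ 2)⁻¹ := by
    rw [← hSfull, hsplit, hzero]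
    ring
  rw [hS]
  have h1r2 : ((1 : ℝ) - r) ^ 2 ≠ 0 := pow_ne_zero 2 h1r
  field_simp
end

section
/- For positive integers n ≥ k, the partial Bell polynomial B_{n,k}(1/2, 1/3, 1/4, …) evaluated at x_m = 1/(m+1) equals (n!/(k!(n+k)!)) · H_{n+k}(n,k), where H_{n+k}(n,k) = Σ over (n₁,…,n_k) with each n_i ≥ 2 and n₁+⋯+n_k = n+k of the multinomial coefficient (n+k)!/(n₁!⋯n_k!). -/
open Finset PowerSeries


private noncomputable def bellBack (k : ℕ) (f : Fin k → ℕ) : ℕ →₀ ℕ :=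
  Finsupp.onFinset (Finset.range k) (fun a => if h : a < k then f ⟨a, h⟩ - 1 else 0)
    (by intro a ha; rw [Finset.mem_range]; by_contra h; exact ha (by simp [dif_neg h]))

private lemma bellBack_apply (k : ℕ) (f : Fin k → ℕ) (a : ℕ) :
    bellBack k f a = if h : a < k then f ⟨a, h⟩ - 1 else 0 := rfl

/-- The partial Bell polynomial `B_{n,k}(1/2, 1/3, 1/4, …)` (at `x_m = 1/(m+1)`), defined by
`Σ_n B_{n,k} tⁿ/n! = (1/k!) (Σ_{m≥1} x_m tᵐ/m!)ᵏ`, equals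
`(n!/(k!(n+k)!)) · H_{n+k}(n,k)` where `H_{n+k}(n,k)` is the sum of multinomial coefficients
`(n+k)!/(n₁!⋯n_k!)` over compositions `n₁+⋯+n_k = n+k` with each part `≥ 2`. -/
theorem bell_at_reciprocals (n k : ℕ) (hk : 0 < k) (hkn : k ≤ n)
    (B : ℕ → ℕ → ℝ)
    (hB : ∀ j : ℕ,
      (PowerSeries.mk fun i : ℕ => B i j / (i.factorial : ℝ)) =
        ((j.factorial : ℝ))⁻¹ •
          (PowerSeries.mk fun m : ℕ =>
            if m = 0 then (0 : ℝ) else (1 / ((m : ℝ) + 1)) / (m.factorial : ℝ)) ^ j) :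
    B n k =
      ((n.factorial : ℝ) / ((k.factorial : ℝ) * ((n + k).factorial : ℝ))) *
        ∑ f ∈ (Fintype.piFinset fun _ : Fin k => Finset.Icc 2 (n + k)).filter
            (fun f => ∑ i, f i = n + k),
          ((n + k).factorial : ℝ) / ∏ i, ((f i).factorial : ℝ) := by
  classical
  set c : ℕ → ℝ := fun m => if m = 0 then (0 : ℝ) else (1 / ((m : ℝ) + 1)) / (m.factorial : ℝ)
    with hc
  have key := congrArg (PowerSeries.coeff (R := ℝ) n) (hB k)
  rw [coeff_mk, map_smul, coeff_pow] at key
  simp only [coeff_mk, smul_eq_mul] at key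
  -- key : B n k / n! = (k!)⁻¹ * ∑ l ∈ finsuppAntidiag (range k) n, ∏ i ∈ range k, c (l i)
  set T := (Fintype.piFinset fun _ : Fin k => Finset.Icc 2 (n + k)).filter
      (fun f => ∑ i, f i = n + k) with hT
  have hsum : ∑ l ∈ finsuppAntidiag (range k) n, ∏ i ∈ range k, c (l i)
      = ∑ f ∈ T, ∏ i : Fin k, ((f i).factorial : ℝ)⁻¹ := by
    rw [← Finset.sum_filter_of_ne (p := fun l : ℕ →₀ ℕ => ∀ j ∈ range k, l j ≠ 0)
      (by
        intro l hl hne j hj hjz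
        apply hne
        refine Finset.prod_eq_zero hj ?_
        simp [hc, hjz])]
    refine Finset.sum_bij' (fun l _ => fun j : Fin k => l j + 1)
      (fun f _ => bellBack k f)
      ?_ ?_ ?_ ?_ ?_
    · intro l hl
      simp only [mem_filter, mem_finsuppAntidiag] at hl
      obtain ⟨⟨hls, _⟩, hlp⟩ := hl
      simp only [hT, mem_filter, Fintype.mem_piFinset, mem_Icc]
      constructor
      · intro j
        have h1 : 1 ≤ l j := Nat.one_le_iff_ne_zero.mpr (hlp j (by simp [j.isLt]))
        have h2 : l j ≤ n := by
          rw [← hls]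
          exact Finset.single_le_sum (f := fun a => l a) (fun _ _ => Nat.zero_le _)
            (by simp [j.isLt])
        omega
      · have : ∑ j : Fin k, l j = n := by
          rw [Fin.sum_univ_eq_sum_range (fun a => l a) k]; exact hls
        calc ∑ j : Fin k, (l j + 1) = (∑ j : Fin k, l j) + k := by
              rw [Finset.sum_add_distrib]; simp
          _ = n + k := by rw [this]
    · intro f hf
      simp only [hT, mem_filter, Fintype.mem_piFinset, mem_Icc] at hf
      obtain ⟨hfm, hfs⟩ := hf
      simp only [mem_filter, mem_finsuppAntidiag]
      have hsum' : ∑ a ∈ range k, bellBack k f a = n := by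
        rw [← Fin.sum_univ_eq_sum_range]
        have : ∀ j : Fin k, bellBack k f (j : ℕ) = f j - 1 := by
          intro j
          simp [bellBack_apply, dif_pos j.isLt]
        rw [Finset.sum_congr rfl (fun j _ => this j)]
        have h1 : ∑ j : Fin k, (f j - 1) + ∑ _j : Fin k, 1 = ∑ j : Fin k, f j := by
          rw [← Finset.sum_add_distrib]
          exact Finset.sum_congr rfl (fun j _ => by have := (hfm j).1; omega)
        simp only [Finset.sum_const, card_univ, Fintype.card_fin, smul_eq_mul, mul_one] at h1
        omega
      refine ⟨⟨hsum', Finsupp.support_onFinset_subset⟩, ?_⟩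
      intro j hj
      simp only [mem_range] at hj
      simp [bellBack_apply, dif_pos hj]
      have := (hfm ⟨j, hj⟩).1
      omega
    · intro l hl
      simp only [mem_filter, mem_finsuppAntidiag] at hl
      obtain ⟨⟨_, hsupp⟩, _⟩ := hl
      ext a
      rw [bellBack_apply]
      by_cases h : a < k
      · simp [dif_pos h]
      · rw [dif_neg h]
        symm
        by_contra hne
        have : a ∈ range k := hsupp (Finsupp.mem_support_iff.mpr hne)
        simp [mem_range] at this; omega
    · intro f hf
      simp only [hT, mem_filter, Fintype.mem_piFinset, mem_Icc] at hf
      funext j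
      simp only [bellBack_apply, dif_pos j.isLt, Fin.eta]
      have := (hf.1 j).1
      omega
    · intro l hl
      simp only [mem_filter, mem_finsuppAntidiag] at hl
      rw [← Fin.prod_univ_eq_prod_range (fun a => c (l a)) k]
      refine Finset.prod_congr rfl ?_
      intro j _
      have hne : l j ≠ 0 := hl.2 j (by simp [j.isLt])
      simp only [hc, if_neg hne]
      rw [Nat.factorial_succ]
      push_cast
      rw [mul_inv, one_div, div_eq_mul_inv]
  rw [hsum] at key
  -- now finish the real arithmetic
  have hfac : ((n + k).factorial : ℝ) ≠ 0 := Nat.cast_ne_zero.mpr (Nat.factorial_ne_zero _)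
  have hnfac : ((n : ℕ).factorial : ℝ) ≠ 0 := Nat.cast_ne_zero.mpr (Nat.factorial_ne_zero _)
  have hB' : B n k = (n.factorial : ℝ) * ((k.factorial : ℝ)⁻¹ *
      ∑ f ∈ T, ∏ i : Fin k, ((f i).factorial : ℝ)⁻¹) := by
    rw [div_eq_iff hnfac] at key
    linarith [key]
  rw [hB']
  rw [Finset.mul_sum, Finset.mul_sum, Finset.mul_sum]
  refine Finset.sum_congr rfl ?_
  intro f _
  have hP : ∏ i : Fin k, ((f i).factorial : ℝ) ≠ 0 :=
    Finset.prod_ne_zero_iff.mpr (fun i _ => Nat.cast_ne_zero.mpr (Nat.factorial_ne_zero _))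
  rw [Finset.prod_inv_distrib]
  field_simp
end

section
/- For a positive integer n and |z| < 1: Li_{-n}(z) = [n! + Σ_{ℓ=1}^{n} (-1)^ℓ b(n,ℓ)(1-z)^ℓ] / (1-z)^{n+1}, where b(n,ℓ) = Σ_{j=0}^{n-ℓ} A(n,j)·C(n-j, ℓ) with A(n,j) the Eulerian numbers. -/
open Finset

open Polynomial
open scoped fwdDiff

/-- The Eulerian number `A(n,j)`. -/
def eulerianNumber (n j : ℕ) : ℤ :=
  ∑ i ∈ Finset.range (j + 1), (-1) ^ i * ((n + 1).choose i : ℤ) * ((j + 1 - i : ℕ) : ℤ) ^ n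

/-- `b(n,ℓ) = Σ_{j=0}^{n-ℓ} A(n,j) C(n-j,ℓ)`. -/
def bCoeff (n ℓ : ℕ) : ℤ :=
  ∑ j ∈ Finset.range (n - ℓ + 1), eulerianNumber n j * ((n - j).choose ℓ : ℤ)


lemma fwdDiff_eval_comp (P : ℤ[X]) :
    fwdDiff (1:ℤ) (fun x => P.eval x) = fun x => (P.comp (X + C 1) - P).eval x := by
  funext x
  simp [fwdDiff, eval_comp]

lemma fwdDiff_iter_zero_fun (m : ℕ) : (fwdDiff (1:ℤ))^[m] (fun _ : ℤ => (0:ℤ)) = fun _ => 0 := by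
  have : (fun _ : ℤ => (0:ℤ)) = ((0:ℤ) • fun _ : ℤ => (0:ℤ)) := by funext x; simp
  rw [this, fwdDiff_iter_const_smul]
  funext x; simp

lemma fwdDiff_iter_eval_eq_zero : ∀ (m : ℕ) (P : ℤ[X]), P.natDegree < m →
    (fwdDiff (1:ℤ))^[m] (fun x => P.eval x) = fun _ => 0 := by
  intro m
  induction m with
  | zero => intro P h; omega
  | succ m ih =>
    intro P h
    rw [Function.iterate_succ_apply, fwdDiff_eval_comp]
    set Q := P.comp (X + C 1) - P with hQ
    by_cases h0 : P.natDegree = 0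
    · obtain ⟨a, rfl⟩ := Polynomial.natDegree_eq_zero.mp h0
      have : Q = 0 := by simp [hQ]
      rw [this]
      simpa using fwdDiff_iter_zero_fun m
    · by_cases hQ0 : Q = 0
      · rw [hQ0]; simpa using fwdDiff_iter_zero_fun m
      · apply ih
        have hP0 : P ≠ 0 := fun hh => h0 (by simp [hh])
        have hcompdeg : (P.comp (X + C 1)).natDegree = P.natDegree := by
          rw [Polynomial.natDegree_comp, Polynomial.natDegree_X_add_C, mul_one]
        have hcomp0 : P.comp (X + C 1) ≠ 0 := by
          intro hh
          rw [hh] at hcompdeg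
          exact h0 (by simpa using hcompdeg.symm)
        have hdeg : (P.comp (X + C 1)).degree = P.degree := by
          rw [Polynomial.degree_eq_natDegree hcomp0, Polynomial.degree_eq_natDegree hP0]
          rw [hcompdeg]
        have hlc : (P.comp (X + C 1)).leadingCoeff = P.leadingCoeff := by
          rw [Polynomial.leadingCoeff_comp (by rw [Polynomial.natDegree_X_add_C]; exact one_ne_zero)]
          rw [Polynomial.leadingCoeff_X_add_C, one_pow, mul_one]
        have := Polynomial.degree_sub_lt hdeg hcomp0 hlc
        have h2 : Q.natDegree < P.natDegree := by
          have := Polynomial.natDegree_lt_natDegree hQ0 (by rwa [hdeg] at this)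
          exact this
        omega

lemma altsum_eval (m : ℕ) (P : ℤ[X]) (hP : P.natDegree < m) :
    ∑ i ∈ range (m + 1), (-1:ℤ) ^ i * (m.choose i : ℤ) * P.eval (i:ℤ) = 0 := by
  have h0 := fwdDiff_iter_eval_eq_zero m P hP
  have h1 := fwdDiff_iter_eq_sum_shift (1:ℤ) (fun x => P.eval x) m 0
  rw [h0] at h1
  have h2 : ∀ k ∈ range (m+1),
      ((-1:ℤ) ^ (m - k) * (m.choose k : ℤ)) • P.eval ((0:ℤ) + k • (1:ℤ))
      = (-1:ℤ)^m * ((-1:ℤ)^k * (m.choose k : ℤ) * P.eval (k:ℤ)) := by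
    intro k hk
    simp only [mem_range] at hk
    have hs : (-1:ℤ)^(m-k) * (-1:ℤ)^k = (-1:ℤ)^m := by
      rw [← pow_add]; congr 1; omega
    have hsq : ((-1:ℤ)^k)^2 = 1 := by
      rw [← pow_mul, mul_comm, pow_mul]; norm_num
    have : (-1:ℤ)^(m-k) = (-1:ℤ)^m * (-1:ℤ)^k := by
      calc (-1:ℤ)^(m-k) = (-1:ℤ)^(m-k) * (((-1:ℤ)^k)^2) := by rw [hsq, mul_one]
        _ = ((-1:ℤ)^(m-k) * (-1:ℤ)^k) * (-1:ℤ)^k := by ring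
        _ = (-1:ℤ)^m * (-1:ℤ)^k := by rw [hs]
    rw [this]
    simp only [smul_eq_mul, zero_add, nsmul_eq_mul, mul_one]
    ring
  rw [Finset.sum_congr rfl h2, ← Finset.mul_sum] at h1
  have hm : (-1:ℤ)^m ≠ 0 := by
    intro hh
    have := pow_eq_zero_iff (n := m) (M₀ := ℤ) (by
      intro h; rw [h] at hh; simpa using hh) |>.mp hh
    norm_num at this
  have := (mul_eq_zero.mp h1.symm).resolve_left hm
  simpa using this

lemma fwdDiff_iter_pow (m : ℕ) :
    (fwdDiff (1:ℤ))^[m] (fun x : ℤ => x ^ m) = fun _ => (m.factorial : ℤ) := by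
  induction m with
  | zero => funext x; simp
  | succ m ih =>
    rw [Function.iterate_succ_apply]
    have h1 : fwdDiff (1:ℤ) (fun x : ℤ => x ^ (m+1))
        = ∑ k ∈ range (m+1), fun x : ℤ => (((m+1).choose k : ℤ)) * x ^ k := by
      funext x
      have hb := add_pow x (1:ℤ) (m+1)
      simp only [one_pow, mul_one] at hb
      have : ∑ k ∈ range (m + 1 + 1), x ^ k * ((m+1).choose k : ℤ)
          = (∑ k ∈ range (m + 1), x ^ k * ((m+1).choose k : ℤ)) + x ^ (m+1) := by
        rw [Finset.sum_range_succ]; simp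
      rw [this] at hb
      simp only [fwdDiff, hb, Finset.sum_apply]
      rw [add_sub_cancel_right]
      exact Finset.sum_congr rfl (fun k _ => by ring)
    rw [h1, fwdDiff_iter_finset_sum]
    have h2 : ∀ k ∈ range (m+1),
        (fwdDiff (1:ℤ))^[m] (fun x : ℤ => (((m+1).choose k : ℤ)) * x ^ k)
        = fun _ : ℤ => (((m+1).choose k : ℤ)) * ((if k = m then (m.factorial : ℤ) else 0)) := by
      intro k hk
      simp only [mem_range] at hk
      have hsmul : (fun x : ℤ => (((m+1).choose k : ℤ)) * x ^ k)
          = (((m+1).choose k : ℤ)) • (fun x : ℤ => x ^ k) := by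
        funext x; simp
      rw [hsmul, fwdDiff_iter_const_smul]
      rcases eq_or_lt_of_le (Nat.lt_succ_iff.mp hk) with h | h
      · subst h; rw [ih]; funext x; simp
      · have : (fwdDiff (1:ℤ))^[m] (fun x : ℤ => x ^ k) = fun _ => 0 := by
          have := fwdDiff_iter_eval_eq_zero m (X ^ k) (by
            rw [Polynomial.natDegree_X_pow]; omega)
          simpa using this
        rw [this]
        funext x
        simp [Nat.ne_of_lt h]
    rw [Finset.sum_congr rfl h2]
    funext x
    rw [Finset.sum_apply]
    rw [Finset.sum_eq_single m]
    · simp only [if_pos rfl, Nat.choose_succ_self_right, Nat.factorial_succ]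
      push_cast
      ring
    · intro k _ hk; simp [hk]
    · intro h; simp at h

def cIdx (n m : ℕ) : ℤ :=
  ∑ i ∈ Finset.range (m + 1), (-1) ^ i * ((n + 1).choose i : ℤ) * ((m - i : ℕ) : ℤ) ^ n

lemma euler_eq_cIdx (n j : ℕ) (hn : 0 < n) : eulerianNumber n j = cIdx n (j + 1) := by
  rw [eulerianNumber, cIdx,
    Finset.sum_range_succ (fun i => (-1:ℤ)^i * ((n+1).choose i : ℤ) * ((j+1-i : ℕ):ℤ)^n) (j+1)]
  simp [Nat.sub_self, zero_pow (by omega : n ≠ 0)]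

lemma cIdx_zero (n : ℕ) (hn : 0 < n) : cIdx n 0 = 0 := by
  simp [cIdx, zero_pow (by omega : n ≠ 0)]

lemma cIdx_vanish (n m : ℕ) (hm : n + 1 ≤ m) : cIdx n m = 0 := by
  set P : ℤ[X] := (C (m:ℤ) - X) ^ n with hP
  have hdeg : P.natDegree < n + 1 := by
    rw [hP, Polynomial.natDegree_pow]
    have : (C (m:ℤ) - X) = -(X - C (m:ℤ)) := by ring
    rw [this, Polynomial.natDegree_neg, Polynomial.natDegree_X_sub_C]
    omega
  have h0 := altsum_eval (n+1) P hdeg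
  rw [cIdx]
  rw [← Finset.sum_subset (Finset.range_subset_range.mpr (by omega : n + 1 + 1 ≤ m + 1))
    (fun i _ hi => by
      simp only [mem_range] at hi
      rw [Nat.choose_eq_zero_of_lt (by simp only [mem_range, not_lt] at hi ⊢; omega)]
      simp)]
  rw [← h0]
  refine Finset.sum_congr rfl (fun i hi => ?_)
  simp only [mem_range] at hi
  rw [hP]
  simp only [Polynomial.eval_pow, Polynomial.eval_sub, Polynomial.eval_C, Polynomial.eval_X]
  rw [Nat.cast_sub (by omega)]

lemma partial_alt (M : ℕ) : ∀ s : ℕ,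
    ∑ i ∈ range (s + 1), (-1:ℤ) ^ i * ((M+1).choose i : ℤ) = (-1:ℤ) ^ s * (M.choose s : ℤ) := by
  intro s
  induction s with
  | zero => simp
  | succ s ih =>
    rw [Finset.sum_range_succ, ih, Nat.choose_succ_succ (M) (s)]
    push_cast
    ring

lemma tri_swap {M : Type*} [AddCommMonoid M] (N : ℕ) (F : ℕ → ℕ → M) :
    ∑ m ∈ range N, ∑ i ∈ range (m + 1), F i (m - i)
      = ∑ i ∈ range N, ∑ t ∈ range (N - i), F i t := by
  induction N with
  | zero => simp
  | succ N ih =>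
    rw [Finset.sum_range_succ, ih]
    have h1 : ∑ i ∈ range (N+1), ∑ t ∈ range (N + 1 - i), F i t
        = ∑ i ∈ range N, ((∑ t ∈ range (N - i), F i t) + F i (N - i)) + F N 0 := by
      rw [Finset.sum_range_succ]
      congr 1
      · refine Finset.sum_congr rfl (fun i hi => ?_)
        simp only [mem_range] at hi
        rw [show N + 1 - i = (N - i) + 1 by omega, Finset.sum_range_succ]
      · rw [show N + 1 - N = 1 by omega, Finset.sum_range_one]
    rw [h1, Finset.sum_add_distrib, Finset.sum_range_succ]
    simp only [Nat.sub_self]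
    abel

lemma tri_exch {M : Type*} [AddCommMonoid M] (N : ℕ) (H : ℕ → ℕ → M) :
    ∑ i ∈ range N, ∑ t ∈ range (N - i), H i t
      = ∑ t ∈ range N, ∑ i ∈ range (N - t), H i t := by
  apply Finset.sum_comm' (s := range N) (t := fun i => range (N - i))
    (t' := range N) (s' := fun t => range (N - t))
  intro x y
  simp only [mem_range]
  omega

lemma D_vanish (n r : ℕ) (hr : 1 ≤ r) :
    ∑ i ∈ range (r + 1), (-1:ℤ) ^ i * ((n+1).choose i : ℤ) * ((n + r - i).choose n : ℤ) = 0 := by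
  set P : ℤ[X] := ∏ t ∈ range n, (C ((n + r - t : ℕ) : ℤ) - X) with hP
  have hfact1 : ∀ a : ℤ, (C a - X : ℤ[X]).natDegree = 1 := by
    intro a
    have : (C a - X : ℤ[X]) = -(X - C a) := by ring
    rw [this, Polynomial.natDegree_neg, Polynomial.natDegree_X_sub_C]
  have hfne : ∀ a : ℤ, (C a - X : ℤ[X]) ≠ 0 := by
    intro a h
    have := hfact1 a
    rw [h] at this
    simp at this
  have hdeg : P.natDegree = n := by
    rw [hP, Polynomial.natDegree_prod _ _ (fun t _ => hfne _),
      Finset.sum_congr rfl (fun t _ => hfact1 _)]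
    simp
  have key : ∀ i : ℕ, i ≤ n + 1 →
      (n.factorial : ℤ) * ((n + r - i).choose n : ℤ) = P.eval (i : ℤ) := by
    intro i hi
    have hev : P.eval (i:ℤ) = ∏ t ∈ range n, (((n + r - t : ℕ) : ℤ) - (i:ℤ)) := by
      rw [hP, Polynomial.eval_prod]
      simp
    rw [hev]
    have hlhs : (n.factorial : ℤ) * ((n + r - i).choose n : ℤ)
        = (((n + r - i).descFactorial n : ℕ) : ℤ) := by
      rw [Nat.descFactorial_eq_factorial_mul_choose]
      push_cast
      ring
    rw [hlhs, Nat.descFactorial_eq_prod_range, Nat.cast_prod]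
    by_cases hir : i ≤ r
    · refine Finset.prod_congr rfl (fun t ht => ?_)
      simp only [mem_range] at ht
      omega
    · rw [Finset.prod_eq_zero (i := n + r - i) (by simp only [mem_range]; omega) (by omega),
        Finset.prod_eq_zero (i := n + r - i) (by simp only [mem_range]; omega) (by
          have : n + r - (n + r - i) = i := by omega
          rw [this]
          ring)]
  have halt := altsum_eval (n+1) P (by omega)
  have hmain : ∑ i ∈ range (n + 2), (-1:ℤ) ^ i * ((n+1).choose i : ℤ) * ((n + r - i).choose n : ℤ) = 0 := by
    have h2 : ∀ i ∈ range (n+2),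
        (n.factorial : ℤ) * ((-1:ℤ) ^ i * ((n+1).choose i : ℤ) * ((n + r - i).choose n : ℤ))
        = (-1:ℤ) ^ i * ((n+1).choose i : ℤ) * P.eval (i:ℤ) := by
      intro i hi
      simp only [mem_range] at hi
      rw [← key i (by omega)]
      ring
    have h3 : (n.factorial : ℤ) *
        (∑ i ∈ range (n + 2), (-1:ℤ) ^ i * ((n+1).choose i : ℤ) * ((n + r - i).choose n : ℤ)) = 0 := by
      rw [Finset.mul_sum, Finset.sum_congr rfl h2, halt]
    rcases mul_eq_zero.mp h3 with h | h
    · exfalso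
      exact Nat.factorial_ne_zero n (by exact_mod_cast h)
    · exact h
  rcases le_or_gt r n with hrn | hrn
  · rw [← hmain]
    apply Finset.sum_subset (Finset.range_subset_range.mpr (by omega))
    intro i _ hi
    simp only [mem_range, not_lt] at hi
    rw [Nat.choose_eq_zero_of_lt (show n + r - i < n by omega)]
    simp
  · rw [← hmain]
    symm
    apply Finset.sum_subset (Finset.range_subset_range.mpr (by omega))
    intro i _ hi
    simp only [mem_range, not_lt] at hi
    rw [Nat.choose_eq_zero_of_lt (show n + 1 < i by omega)]
    simp

lemma worp (n k : ℕ) :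
    ∑ m ∈ range (k + 1), cIdx n m * ((k - m + n).choose n : ℤ) = (k:ℤ) ^ n := by
  have h1 : ∑ m ∈ range (k + 1), cIdx n m * ((k - m + n).choose n : ℤ)
      = ∑ m ∈ range (k + 1), ∑ i ∈ range (m + 1),
          (fun i t => (-1:ℤ)^i * ((n+1).choose i : ℤ) * ((t:ℕ):ℤ)^n * ((k + n - (i + t)).choose n : ℤ))
            i (m - i) := by
    refine Finset.sum_congr rfl (fun m hm => ?_)
    simp only [mem_range] at hm
    rw [cIdx, Finset.sum_mul]
    refine Finset.sum_congr rfl (fun i hi => ?_)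
    simp only [mem_range] at hi
    have h2 : k + n - (i + (m - i)) = k - m + n := by omega
    dsimp only
    rw [h2]
  rw [h1, tri_swap (k+1)
      (fun i t => (-1:ℤ)^i * ((n+1).choose i : ℤ) * ((t:ℕ):ℤ)^n * ((k + n - (i + t)).choose n : ℤ)),
    tri_exch (k+1)
      (fun i t => (-1:ℤ)^i * ((n+1).choose i : ℤ) * ((t:ℕ):ℤ)^n * ((k + n - (i + t)).choose n : ℤ)),
    Finset.sum_range_succ]
  have h3 : ∀ t ∈ range k, ∑ i ∈ range (k + 1 - t),
      (-1:ℤ)^i * ((n+1).choose i : ℤ) * ((t:ℕ):ℤ)^n * ((k + n - (i + t)).choose n : ℤ) = 0 := by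
    intro t ht
    simp only [mem_range] at ht
    have hr : 1 ≤ k - t := by omega
    have h4 : ∑ i ∈ range (k + 1 - t),
        (-1:ℤ)^i * ((n+1).choose i : ℤ) * ((t:ℕ):ℤ)^n * ((k + n - (i + t)).choose n : ℤ)
        = ((t:ℕ):ℤ)^n * ∑ i ∈ range ((k - t) + 1),
            (-1:ℤ)^i * ((n+1).choose i : ℤ) * ((n + (k - t) - i).choose n : ℤ) := by
      rw [Finset.mul_sum, show k + 1 - t = (k - t) + 1 by omega]
      refine Finset.sum_congr rfl (fun i hi => ?_)
      simp only [mem_range] at hi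
      rw [show k + n - (i + t) = n + (k - t) - i by omega]
      ring
    rw [h4, D_vanish n (k - t) hr, mul_zero]
  rw [Finset.sum_congr rfl h3]
  simp only [Finset.sum_const_zero, zero_add]
  rw [show k + 1 - k = 1 by omega, Finset.sum_range_one]
  simp

lemma euler_reflect (n j : ℕ) (hj : j ≤ n) :
    eulerianNumber n j = ∑ i ∈ range (n - j + 1),
      (-1:ℤ) ^ i * ((n+1).choose i : ℤ) * ((n - j - i : ℕ) : ℤ) ^ n := by
  set g : ℕ → ℤ := fun i => (-1:ℤ) ^ i * ((n+1).choose i : ℤ) * (((j:ℤ) + 1 - i)) ^ n with hg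
  have hfull : ∑ i ∈ range (n + 2), g i = 0 := by
    set P : ℤ[X] := (C ((j:ℤ) + 1) - X) ^ n with hP
    have hdeg : P.natDegree < n + 1 := by
      rw [hP, Polynomial.natDegree_pow]
      have : (C ((j:ℤ)+1) - X : ℤ[X]) = -(X - C ((j:ℤ)+1)) := by ring
      rw [this, Polynomial.natDegree_neg, Polynomial.natDegree_X_sub_C]
      omega
    have := altsum_eval (n+1) P hdeg
    rw [← this]
    refine Finset.sum_congr rfl (fun i hi => ?_)
    rw [hg, hP]
    simp
  have hsplit : ∑ i ∈ range (j + 1), g i + ∑ i ∈ Ico (j+1) (n+2), g i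
      = ∑ i ∈ range (n + 2), g i := by
    rw [Finset.range_eq_Ico, Finset.range_eq_Ico]
    exact Finset.sum_Ico_consecutive _ (by omega) (by omega)
  have hE : eulerianNumber n j = ∑ i ∈ range (j + 1), g i := by
    rw [eulerianNumber]
    refine Finset.sum_congr rfl (fun i hi => ?_)
    simp only [mem_range] at hi
    rw [hg]
    congr 2
    omega
  have hrefl : ∑ i ∈ Ico (j+1) (n+2), g i
      = ∑ i ∈ range (n - j + 1), g (n + 1 - i) := by
    rw [Finset.range_eq_Ico]
    have := Finset.sum_Ico_reflect g 0 (n := n + 1) (m := n - j + 1) (by omega)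
    rw [show n + 1 + 1 - (n - j + 1) = j + 1 by omega, show n + 1 + 1 - 0 = n + 2 by omega] at this
    rw [← this]
  have hterm : ∀ i ∈ range (n - j + 1),
      g (n + 1 - i) = -((-1:ℤ) ^ i * ((n+1).choose i : ℤ) * ((n - j - i : ℕ) : ℤ) ^ n) := by
    intro i hi
    simp only [mem_range] at hi
    rw [hg]
    dsimp only
    have hc : (n+1).choose (n + 1 - i) = (n+1).choose i := Nat.choose_symm (by omega)
    have hsq : ((-1:ℤ) ^ i) ^ 2 = 1 := by
      rw [← pow_mul, mul_comm, pow_mul]; norm_num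
    have hsign : (-1:ℤ) ^ (n + 1 - i) = (-1:ℤ) ^ (n+1) * (-1:ℤ) ^ i := by
      have h := pow_add (-1:ℤ) (n + 1 - i) i
      rw [show n + 1 - i + i = n + 1 by omega] at h
      rw [h, mul_assoc, ← sq, hsq, mul_one]
    have hbase : ((j:ℤ) + 1 - ((n + 1 - i : ℕ) : ℤ)) = -(((n - j - i : ℕ) : ℤ)) := by omega
    rw [hc, hsign, hbase]
    have hsign2 : (-1:ℤ) ^ (n + 1) * (-1:ℤ)^n = -1 := by
      rw [← pow_add]
      have : n + 1 + n = 2 * n + 1 := by omega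
      rw [this, pow_succ, pow_mul]
      norm_num
    calc (-1:ℤ)^(n+1) * (-1:ℤ)^i * ((n+1).choose i : ℤ) * (-((n - j - i:ℕ):ℤ))^n
        = ((-1:ℤ)^(n+1) * (-1:ℤ)^n) * ((-1:ℤ)^i * ((n+1).choose i : ℤ) * ((n - j - i:ℕ):ℤ)^n) := by
          ring
      _ = -((-1:ℤ) ^ i * ((n+1).choose i : ℤ) * ((n - j - i : ℕ) : ℤ) ^ n) := by
          rw [hsign2]; ring
  have : eulerianNumber n j
      = - ∑ i ∈ range (n - j + 1), g (n + 1 - i) := by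
    rw [hE]
    have h0 := hsplit.trans hfull
    rw [hrefl] at h0
    linarith
  rw [this, Finset.sum_congr rfl hterm, Finset.sum_neg_distrib]
  simp

lemma euler_nn (n : ℕ) (hn : 0 < n) : eulerianNumber n n = 0 := by
  rw [euler_eq_cIdx n n hn]
  exact cIdx_vanish n (n+1) (by omega)

lemma euler_symm (n j : ℕ) (hn : 0 < n) (hj : j < n) :
    eulerianNumber n (n - 1 - j) = eulerianNumber n j := by
  rw [euler_reflect n j (by omega), eulerianNumber]
  rw [show n - 1 - j + 1 = n - j by omega]
  rw [Finset.sum_range_succ]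
  rw [show n - j - (n - j) = 0 by omega]
  rw [Nat.cast_zero, zero_pow (by omega : n ≠ 0), mul_zero, add_zero]

lemma sumA (n : ℕ) (hn : 0 < n) :
    ∑ j ∈ range (n + 1), eulerianNumber n j = (n.factorial : ℤ) := by
  have h1 : ∑ j ∈ range (n + 1), eulerianNumber n j = ∑ m ∈ range (n + 2), cIdx n m := by
    rw [Finset.sum_range_succ' (cIdx n) (n+1), cIdx_zero n hn, add_zero]
    exact Finset.sum_congr rfl (fun j _ => euler_eq_cIdx n j hn)
  have h2 : ∑ m ∈ range (n + 2), cIdx n m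
      = ∑ m ∈ range (n + 2), ∑ i ∈ range (m + 1),
          (fun i t => (-1:ℤ)^i * ((n+1).choose i : ℤ) * ((t:ℕ):ℤ)^n) i (m - i) :=
    Finset.sum_congr rfl (fun m _ => by rw [cIdx])
  rw [h1, h2, tri_swap (n+2) (fun i t => (-1:ℤ)^i * ((n+1).choose i : ℤ) * ((t:ℕ):ℤ)^n),
    tri_exch (n+2) (fun i t => (-1:ℤ)^i * ((n+1).choose i : ℤ) * ((t:ℕ):ℤ)^n)]
  have h3 : ∀ t ∈ range (n + 2),
      ∑ i ∈ range (n + 2 - t), (fun i (t' : ℕ) => (-1:ℤ)^i * ((n+1).choose i : ℤ) * ((t':ℕ):ℤ)^n) i t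
      = ((t:ℕ):ℤ)^n * ((-1:ℤ)^(n+1-t) * (n.choose (n+1-t) : ℤ)) := by
    intro t ht
    simp only [mem_range] at ht
    have : ∑ i ∈ range (n + 2 - t), (-1:ℤ)^i * ((n+1).choose i : ℤ) * ((t:ℕ):ℤ)^n
        = ((t:ℕ):ℤ)^n * ∑ i ∈ range ((n + 1 - t) + 1), (-1:ℤ)^i * ((n+1).choose i : ℤ) := by
      rw [Finset.mul_sum, show n + 2 - t = (n + 1 - t) + 1 by omega]
      exact Finset.sum_congr rfl (fun i _ => by ring)
    rw [this, partial_alt n (n+1-t)]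
  rw [Finset.sum_congr rfl h3]
  rw [Finset.sum_range_succ' _ (n+1)]
  rw [Nat.cast_zero, zero_pow (by omega : n ≠ 0), zero_mul, add_zero]
  have h4 := fwdDiff_iter_eq_sum_shift (1:ℤ) (fun x : ℤ => x ^ n) n 1
  rw [fwdDiff_iter_pow n] at h4
  have h5 : ∑ k ∈ range (n+1), ((k+1:ℕ):ℤ)^n * ((-1:ℤ)^(n+1-(k+1)) * (n.choose (n+1-(k+1)) : ℤ))
      = ∑ k ∈ range (n + 1), ((-1:ℤ) ^ (n - k) * (n.choose k : ℤ)) • ((1:ℤ) + k • (1:ℤ)) ^ n := by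
    refine Finset.sum_congr rfl (fun k hk => ?_)
    simp only [mem_range] at hk
    rw [show n + 1 - (k + 1) = n - k by omega, Nat.choose_symm (by omega : k ≤ n)]
    simp only [smul_eq_mul, nsmul_eq_mul, mul_one]
    push_cast
    ring
  rw [h5]
  exact h4.symm
lemma bCoeff_zero (n : ℕ) (hn : 0 < n) : bCoeff n 0 = (n.factorial : ℤ) := by
  rw [bCoeff, ← sumA n hn]
  simp


lemma numerator_eq (n : ℕ) (hn : 0 < n) (z : ℝ) :
    ∑ m ∈ range (n + 2), (cIdx n m : ℝ) * z ^ m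
      = (n.factorial : ℝ) + ∑ ℓ ∈ Icc 1 n, (-1:ℝ) ^ ℓ * (bCoeff n ℓ : ℝ) * (1 - z) ^ ℓ := by
  have hL : ∑ m ∈ range (n + 2), (cIdx n m : ℝ) * z ^ m
      = ∑ j ∈ range n, (eulerianNumber n j : ℝ) * z ^ (j + 1) := by
    rw [Finset.sum_range_succ' (fun m => (cIdx n m : ℝ) * z ^ m) (n+1)]
    rw [cIdx_zero n hn]
    simp only [Int.cast_zero, zero_mul, pow_zero, mul_one, add_zero]
    rw [Finset.sum_range_succ]
    rw [← euler_eq_cIdx n n hn, euler_nn n hn]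
    simp only [Int.cast_zero, zero_mul, add_zero]
    exact Finset.sum_congr rfl (fun j _ => by rw [← euler_eq_cIdx n j hn])
  have hR : (n.factorial : ℝ) + ∑ ℓ ∈ Icc 1 n, (-1:ℝ) ^ ℓ * (bCoeff n ℓ : ℝ) * (1 - z) ^ ℓ
      = ∑ ℓ ∈ range (n + 1), (-1:ℝ) ^ ℓ * (bCoeff n ℓ : ℝ) * (1 - z) ^ ℓ := by
    rw [Finset.sum_range_succ' (fun ℓ => (-1:ℝ) ^ ℓ * (bCoeff n ℓ : ℝ) * (1 - z) ^ ℓ) n]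
    simp only [pow_zero, one_mul, mul_one]
    rw [bCoeff_zero n hn]
    rw [← Finset.Ico_add_one_right_eq_Icc, Finset.sum_Ico_eq_sum_range]
    rw [show n + 1 - 1 = n by omega]
    have : ∀ i ∈ range n,
        (-1:ℝ) ^ (1 + i) * (bCoeff n (1 + i) : ℝ) * (1 - z) ^ (1 + i)
        = (-1:ℝ) ^ (i + 1) * (bCoeff n (i + 1) : ℝ) * (1 - z) ^ (i + 1) := by
      intro i _
      rw [add_comm 1 i]
    rw [Finset.sum_congr rfl this]
    push_cast
    ring
  have hexp : ∑ ℓ ∈ range (n + 1), (-1:ℝ) ^ ℓ * (bCoeff n ℓ : ℝ) * (1 - z) ^ ℓ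
      = ∑ ℓ ∈ range (n + 1), ∑ j ∈ range (n + 1 - ℓ),
          (fun ℓ j => (eulerianNumber n j : ℝ) * ((n - j).choose ℓ : ℝ) * (z - 1) ^ ℓ) ℓ j := by
    refine Finset.sum_congr rfl (fun ℓ hℓ => ?_)
    simp only [mem_range] at hℓ
    rw [bCoeff, show n + 1 - ℓ = n - ℓ + 1 by omega]
    push_cast
    rw [Finset.mul_sum, Finset.sum_mul]
    refine Finset.sum_congr rfl (fun j hj => ?_)
    have : (-1:ℝ) ^ ℓ * (1 - z) ^ ℓ = (z - 1) ^ ℓ := by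
      rw [← mul_pow]
      congr 1
      ring
    calc (-1:ℝ) ^ ℓ * ((eulerianNumber n j : ℝ) * ((n - j).choose ℓ : ℝ)) * (1 - z) ^ ℓ
        = (eulerianNumber n j : ℝ) * ((n - j).choose ℓ : ℝ) * ((-1:ℝ) ^ ℓ * (1 - z) ^ ℓ) := by ring
      _ = (eulerianNumber n j : ℝ) * ((n - j).choose ℓ : ℝ) * (z - 1) ^ ℓ := by rw [this]
  have hpow : ∑ j ∈ range (n + 1), ∑ ℓ ∈ range (n + 1 - j),
          (fun ℓ j => (eulerianNumber n j : ℝ) * ((n - j).choose ℓ : ℝ) * (z - 1) ^ ℓ) ℓ j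
      = ∑ j ∈ range (n + 1), (eulerianNumber n j : ℝ) * z ^ (n - j) := by
    refine Finset.sum_congr rfl (fun j hj => ?_)
    simp only [mem_range] at hj
    have hb := add_pow (z - 1) (1:ℝ) (n - j)
    simp only [sub_add_cancel, one_pow, mul_one] at hb
    rw [show n + 1 - j = (n - j) + 1 by omega]
    have : ∀ ℓ ∈ range ((n - j) + 1),
        (fun ℓ j => (eulerianNumber n j : ℝ) * ((n - j).choose ℓ : ℝ) * (z - 1) ^ ℓ) ℓ j
        = (eulerianNumber n j : ℝ) * ((z - 1) ^ ℓ * ((n - j).choose ℓ : ℝ)) := by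
      intro ℓ _
      dsimp only
      ring
    rw [Finset.sum_congr rfl this, ← Finset.mul_sum, ← hb]
  have hrefl : ∑ j ∈ range (n + 1), (eulerianNumber n j : ℝ) * z ^ (n - j)
      = ∑ j ∈ range n, (eulerianNumber n j : ℝ) * z ^ (j + 1) := by
    rw [Finset.sum_range_succ, euler_nn n hn]
    simp only [Int.cast_zero, zero_mul, add_zero]
    rw [← Finset.sum_range_reflect (fun j => (eulerianNumber n j : ℝ) * z ^ (n - j)) n]
    refine Finset.sum_congr rfl (fun j hj => ?_)
    simp only [mem_range] at hj
    rw [euler_symm n j hn hj, show n - (n - 1 - j) = j + 1 by omega]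
  rw [hL, hR, hexp, tri_exch (n+1)
    (fun ℓ j => (eulerianNumber n j : ℝ) * ((n - j).choose ℓ : ℝ) * (z - 1) ^ ℓ), hpow, hrefl]

/-- `Li_{-n}(z) = [n! + Σ_{ℓ=1}^n (-1)^ℓ b(n,ℓ)(1-z)^ℓ]/(1-z)^{n+1}` for `|z| < 1`. -/
theorem polylog_neg_int_expansion (n : ℕ) (hn : 0 < n) (z : ℝ) (hz : |z| < 1) :
    HasSum (fun k : ℕ => (k : ℝ) ^ n * z ^ k)
      (((n.factorial : ℝ) +
          ∑ ℓ ∈ Finset.Icc 1 n, (-1 : ℝ) ^ ℓ * (bCoeff n ℓ : ℝ) * (1 - z) ^ ℓ) /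
        (1 - z) ^ (n + 1)) := by
  have hz' : ‖z‖ < 1 := by rwa [Real.norm_eq_abs]
  have h1 : HasSum (fun j : ℕ => (((j + n).choose n : ℕ) : ℝ) * z ^ j) (1 / (1 - z) ^ (n + 1)) :=
    hasSum_choose_mul_geometric_of_norm_lt_one n hz'
  set S : ℝ := 1 / (1 - z) ^ (n + 1) with hS
  set f : ℕ → ℕ → ℝ := fun m k =>
    (if m ≤ k then (cIdx n m : ℝ) * (((k - m + n).choose n : ℕ) : ℝ) else 0) * z ^ k with hf
  have hs : ∀ m ∈ range (n + 2), HasSum (f m) ((cIdx n m : ℝ) * z ^ m * S) := by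
    intro m _
    have h2 := h1.mul_left ((cIdx n m : ℝ) * z ^ m)
    have h3 : (fun j => (cIdx n m : ℝ) * z ^ m * ((((j + n).choose n : ℕ) : ℝ) * z ^ j))
        = fun j => f m (j + m) := by
      funext j
      rw [hf]
      dsimp only
      rw [if_pos (by omega : m ≤ j + m), show j + m - m + n = j + n by omega, pow_add]
      ring
    rw [h3] at h2
    have h4 := (hasSum_nat_add_iff (f := f m) m).mp h2
    have h5 : ∑ i ∈ range m, f m i = 0 := by
      refine Finset.sum_eq_zero (fun i hi => ?_)
      simp only [mem_range] at hi
      rw [hf]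
      dsimp only
      rw [if_neg (by omega), zero_mul]
    rwa [h5, add_zero] at h4
  have htot := hasSum_sum hs
  have hfun : (fun k => ∑ m ∈ range (n + 2), f m k) = fun k : ℕ => (k : ℝ) ^ n * z ^ k := by
    funext k
    have hZ : ∑ m ∈ range (n + 2), (if m ≤ k then cIdx n m * (((k - m + n).choose n : ℕ) : ℤ) else 0)
        = (k : ℤ) ^ n := by
      rcases le_or_gt (n + 2) (k + 1) with hc | hc
      · rw [← worp n k]
        have hstep : ∑ m ∈ range (k+1), cIdx n m * (((k - m + n).choose n : ℕ) : ℤ)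
            = ∑ m ∈ range (k+1), (if m ≤ k then cIdx n m * (((k - m + n).choose n : ℕ) : ℤ) else 0) :=
          Finset.sum_congr rfl (fun m hm => by
            simp only [mem_range] at hm
            rw [if_pos (by omega : m ≤ k)])
        rw [hstep]
        apply Finset.sum_subset (Finset.range_subset_range.mpr (by omega))
        intro m _ hm
        simp only [mem_range, not_lt] at hm
        by_cases hmk : m ≤ k
        · rw [if_pos hmk, cIdx_vanish n m (by omega), zero_mul]
        · rw [if_neg hmk]
      · rw [← worp n k]
        have hstep : ∑ m ∈ range (k+1), cIdx n m * (((k - m + n).choose n : ℕ) : ℤ)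
            = ∑ m ∈ range (k+1), (if m ≤ k then cIdx n m * (((k - m + n).choose n : ℕ) : ℤ) else 0) :=
          Finset.sum_congr rfl (fun m hm => by
            simp only [mem_range] at hm
            rw [if_pos (by omega : m ≤ k)])
        rw [hstep]
        symm
        apply Finset.sum_subset (Finset.range_subset_range.mpr (by omega))
        intro m _ hm
        simp only [mem_range, not_lt] at hm
        rw [if_neg (by omega)]
    have : ∑ m ∈ range (n + 2), f m k
        = (∑ m ∈ range (n + 2), (if m ≤ k then (cIdx n m : ℝ) * (((k - m + n).choose n : ℕ) : ℝ) else 0)) * z ^ k := by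
      rw [Finset.sum_mul]
    rw [this]
    congr 1
    have hcast : ∀ m : ℕ, (if m ≤ k then (cIdx n m : ℝ) * (((k - m + n).choose n : ℕ) : ℝ) else 0)
        = (((if m ≤ k then cIdx n m * (((k - m + n).choose n : ℕ) : ℤ) else 0) : ℤ) : ℝ) := by
      intro m
      split_ifs
      · push_cast; ring
      · simp
    rw [Finset.sum_congr rfl (fun m _ => hcast m), ← Int.cast_sum, hZ]
    push_cast
    rfl
  rw [hfun] at htot
  have hval : ∑ m ∈ range (n + 2), (cIdx n m : ℝ) * z ^ m * S
      = ((n.factorial : ℝ) +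
          ∑ ℓ ∈ Finset.Icc 1 n, (-1 : ℝ) ^ ℓ * (bCoeff n ℓ : ℝ) * (1 - z) ^ ℓ) /
        (1 - z) ^ (n + 1) := by
    rw [← Finset.sum_mul, numerator_eq n hn z, hS, mul_one_div]
  rwa [hval] at htot
end

section
/- Let k be a nonnegative integer and a, b complex numbers. For |z| < 1, Σ_{ν=-∞}^{∞} (|ν|·a + b)_k · z^{|ν|} = -(b)_k + 2·Σ_{q=0}^{k} g(k,q;a,b)·(1-z)^{-q-1}, where g(k,q;a,b) = Σ_{p=0}^{k-q} (-1)^p · s(k,p+q;b) · b(p+q,p) · a^{p+q}, with s(n,ℓ;y) = Σ_{m=ℓ}^{n} C(m,ℓ)·s(n,m)·(y+n-1)^{m-ℓ} (s(n,m) signed Stirling numbers of the first kind) and b(n,ℓ) = Σ_{j=0}^{n-ℓ} A(n,j)·C(n-j,ℓ) (A(n,j) Eulerian numbers). -/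
open Finset

/-- `s(n,ℓ;y) = Σ_{m=ℓ}^n C(m,ℓ) s(n,m) (y+n-1)^{m-ℓ}` with `s(n,m)` the signed Stirling
numbers of the first kind (coefficients of `x(x-1)⋯(x-n+1)`). -/
noncomputable def stirlingShift (n ℓ : ℕ) (y : ℂ) : ℂ :=
  ∑ m ∈ Finset.Icc ℓ n,
    (m.choose ℓ : ℂ) * (((descPochhammer ℤ n).coeff m : ℤ) : ℂ) * (y + n - 1) ^ (m - ℓ)

/-- `g(k,q;a,b) = Σ_{p=0}^{k-q} (-1)^p s(k,p+q;b) b(p+q,p) a^{p+q}`. -/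
noncomputable def gCoeff (k q : ℕ) (a b : ℂ) : ℂ :=
  ∑ p ∈ Finset.range (k - q + 1),
    (-1 : ℂ) ^ p * stirlingShift k (p + q) b * (bCoeff (p + q) p : ℂ) * a ^ (p + q)

open Polynomial

lemma eulerian_zero_col (n : ℕ) : eulerianNumber n 0 = 1 := by
  simp [eulerianNumber]

lemma alternating_sum_annihilates (d : ℕ) (P : Polynomial ℤ) (hP : P.degree < d) :
    ∑ i ∈ range (d + 1), (-1 : ℤ) ^ i * (d.choose i : ℤ) * P.eval (i : ℤ) = 0 := by
  induction d generalizing P with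
  | zero =>
    have h0 : P = 0 := degree_eq_bot.mp (by simpa using hP)
    simp [h0]
  | succ d ih =>
    set Q := P.comp (X + C 1) with hQ
    have hQeval : ∀ i : ℤ, Q.eval i = P.eval (i + 1) := by
      intro i; simp [hQ, eval_comp]
    have hsub : (P - Q).degree < d := by
      by_cases hPQ : P = Q
      · rw [hPQ, sub_self, degree_zero]
        exact_mod_cast WithBot.bot_lt_coe d
      have hP0 : P ≠ 0 := by
        intro h0
        exact hPQ (by rw [h0, hQ, h0, zero_comp])
      have hPd : P.degree ≤ (d : ℕ) := by
        apply natDegree_le_iff_degree_le.mp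
        have := (natDegree_lt_iff_degree_lt hP0).mpr (by exact_mod_cast hP)
        omega
      have hQdeg : Q.degree ≤ P.degree := by
        calc Q.degree ≤ (Q.natDegree : WithBot ℕ) := degree_le_natDegree
          _ ≤ (P.natDegree : WithBot ℕ) := by
              exact_mod_cast le_trans natDegree_comp_le
                (by rw [natDegree_X_add_C, mul_one])
          _ = P.degree := (degree_eq_natDegree hP0).symm
      rcases lt_or_eq_of_le hPd with h | h
      · exact lt_of_le_of_lt (degree_sub_le P Q) (max_lt h (lt_of_le_of_lt hQdeg h))
      · have hnd : (X + C (1:ℤ)).natDegree ≠ 0 := by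
          rw [natDegree_X_add_C]; exact one_ne_zero
        have hlc : Q.leadingCoeff = P.leadingCoeff := by
          rw [hQ, leadingCoeff_comp hnd, leadingCoeff_X_add_C, one_pow, mul_one]
        have hQ0 : Q ≠ 0 := by
          intro h0
          apply hP0
          rw [← leadingCoeff_eq_zero, ← hlc, h0, leadingCoeff_zero]
        have hdeg : Q.degree = P.degree := by
          rw [degree_eq_natDegree hQ0, degree_eq_natDegree hP0]
          norm_cast
          rw [hQ, natDegree_comp, natDegree_X_add_C, mul_one]
        calc (P - Q).degree < P.degree := degree_sub_lt hdeg.symm hP0 hlc.symm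
          _ = (d : ℕ) := h
    have key : ∑ i ∈ range (d + 1), (-1 : ℤ) ^ i * (d.choose i : ℤ) * (P - Q).eval (i : ℤ)
        = 0 := ih _ hsub
    have hsplit : ∑ i ∈ range (d + 1), (-1 : ℤ) ^ i * (d.choose i : ℤ) * P.eval (i : ℤ)
        - ∑ i ∈ range (d + 1), (-1 : ℤ) ^ i * (d.choose i : ℤ) * Q.eval (i : ℤ) = 0 := by
      rw [← Finset.sum_sub_distrib, ← key]
      apply Finset.sum_congr rfl
      intro i _
      rw [eval_sub]; ring
    rw [Finset.sum_range_succ']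
    have congr1 : ∑ i ∈ range (d + 1),
          (-1 : ℤ) ^ (i + 1) * (((d+1).choose (i+1) : ℕ) : ℤ) * P.eval (((i+1 : ℕ) : ℤ))
        = ∑ i ∈ range (d + 1), ((-1 : ℤ) ^ (i + 1) * ((d.choose i : ℕ) : ℤ) * P.eval ((i : ℤ) + 1)
            + (-1 : ℤ) ^ (i + 1) * ((d.choose (i+1) : ℕ) : ℤ) * P.eval ((i : ℤ) + 1)) := by
      apply Finset.sum_congr rfl
      intro i _
      rw [Nat.choose_succ_succ]
      push_cast
      ring
    rw [congr1, Finset.sum_add_distrib]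
    have hA' : ∑ i ∈ range (d + 1),
          (-1 : ℤ) ^ (i + 1) * ((d.choose i : ℕ) : ℤ) * P.eval ((i : ℤ) + 1)
        = - ∑ i ∈ range (d + 1), (-1 : ℤ) ^ i * (d.choose i : ℤ) * Q.eval (i : ℤ) := by
      rw [← Finset.sum_neg_distrib]
      apply Finset.sum_congr rfl
      intro i _
      rw [hQeval]
      ring
    have hB' : ∑ i ∈ range (d + 1),
          (-1 : ℤ) ^ (i + 1) * ((d.choose (i+1) : ℕ) : ℤ) * P.eval ((i : ℤ) + 1)
        = (∑ i ∈ range (d + 1), (-1 : ℤ) ^ i * (d.choose i : ℤ) * P.eval (i : ℤ))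
            - P.eval 0 := by
      rw [Finset.sum_range_succ' (fun i => (-1 : ℤ) ^ i * (d.choose i : ℤ) * P.eval (i : ℤ)) d]
      rw [Finset.sum_range_succ]
      simp [Nat.choose_succ_self]
    rw [hA', hB']
    simp only [pow_zero, Nat.choose_zero_right, Nat.cast_one, one_mul, Nat.cast_zero]
    linarith [hsplit]

lemma eulerian_top (ℓ : ℕ) : eulerianNumber ℓ (ℓ + 1) = 0 := by
  have hdeg : ((C ((ℓ:ℤ)+2) - X) ^ ℓ).degree < ((ℓ+1 : ℕ) : WithBot ℕ) := by
    refine lt_of_le_of_lt (degree_pow_le _ _) ?_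
    refine lt_of_le_of_lt (nsmul_le_nsmul_right (degree_sub_le _ _) ℓ) ?_
    have : max (C ((ℓ:ℤ)+2)).degree (X : ℤ[X]).degree ≤ 1 := by
      apply max_le
      · exact le_trans degree_C_le (by norm_num)
      · rw [degree_X]
    refine lt_of_le_of_lt (nsmul_le_nsmul_right this ℓ) ?_
    rw [show ℓ • (1 : WithBot ℕ) = (ℓ : WithBot ℕ) by
      simp [nsmul_eq_mul, mul_one]]
    exact_mod_cast WithBot.coe_lt_coe.mpr (Nat.lt_succ_self ℓ)
  have h := alternating_sum_annihilates (ℓ+1) ((C ((ℓ:ℤ)+2) - X) ^ ℓ) hdeg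
  rw [eulerianNumber, ← h]
  apply Finset.sum_congr rfl
  intro i hi
  have hi' : i ≤ ℓ + 1 := by simpa [Nat.lt_succ_iff] using hi
  have : ((ℓ + 1 + 1 - i : ℕ) : ℤ) = (ℓ : ℤ) + 2 - i := by
    push_cast [Nat.cast_sub (by omega : i ≤ ℓ + 2)]; ring
  rw [this]
  simp [eval_pow, eval_sub, eval_C, eval_X]

lemma eulerian_rec (ℓ t : ℕ) (ht : t ≤ ℓ) :
    eulerianNumber (ℓ + 1) (t + 1) =
      (t + 2 : ℤ) * eulerianNumber ℓ (t + 1) + ((ℓ - t : ℕ) : ℤ) * eulerianNumber ℓ t := by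
  set c : ℕ → ℤ := fun i => (-1) ^ i * ((ℓ + 1).choose i : ℤ) with hc
  set S1 : ℤ := ∑ i ∈ range (t + 2), c i * ((t : ℤ) + 2 - i) ^ (ℓ + 1) with hS1
  set S2 : ℤ := ∑ i ∈ range (t + 2), c i * ((t : ℤ) + 1 - i) ^ (ℓ + 1) with hS2
  set T1 : ℤ := ∑ i ∈ range (t + 2), ((t : ℤ) + 2) * (c i * ((t : ℤ) + 2 - i) ^ ℓ) with hT1
  set T2 : ℤ := ∑ i ∈ range (t + 2), ((ℓ : ℤ) - t) * (c i * ((t : ℤ) + 1 - i) ^ ℓ) with hT2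
  set W : ℤ := ∑ i ∈ range (t + 1), (-1 : ℤ) ^ i * (ℓ.choose i : ℤ) * ((t : ℤ) + 1 - i) ^ ℓ
    with hW
  -- step 1: LHS = S1 - S2
  have hE : eulerianNumber (ℓ + 1) (t + 1)
      = ∑ i ∈ range (t + 2), (-1 : ℤ) ^ i * ((ℓ + 2).choose i : ℤ)
          * ((t : ℤ) + 2 - i) ^ (ℓ + 1) := by
    rw [eulerianNumber]
    apply Finset.sum_congr (by norm_num)
    intro i hi
    have hi' : i < t + 2 := by simpa using hi
    have h2 : ((t + 1 + 1 - i : ℕ) : ℤ) = (t : ℤ) + 2 - i := by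
      push_cast [Nat.cast_sub (by omega : i ≤ t + 2)]; ring
    rw [h2]
  have hS2' : S2 = ∑ i ∈ range (t + 1), c i * ((t : ℤ) + 1 - i) ^ (ℓ + 1) := by
    rw [hS2, Finset.sum_range_succ]
    have : ((t : ℤ) + 1 - ((t + 1 : ℕ) : ℤ)) ^ (ℓ + 1) = 0 := by
      push_cast
      rw [show (t:ℤ) + 1 - ((t:ℤ) + 1) = 0 by ring, zero_pow (by omega : ℓ + 1 ≠ 0)]
    rw [this, mul_zero, add_zero]
  have hS1' : S1 = (∑ i ∈ range (t + 1), c (i + 1) * ((t : ℤ) + 2 - ((i + 1 : ℕ) : ℤ)) ^ (ℓ + 1))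
      + c 0 * ((t : ℤ) + 2 - ((0 : ℕ) : ℤ)) ^ (ℓ + 1) := by
    rw [hS1]; exact Finset.sum_range_succ' _ (t + 1)
  have hL : eulerianNumber (ℓ + 1) (t + 1) = S1 - S2 := by
    rw [hE, Finset.sum_range_succ' _ (t + 1)]
    have e1 : ∀ i ∈ range (t + 1),
        (-1 : ℤ) ^ (i + 1) * ((ℓ + 2).choose (i + 1) : ℤ)
            * ((t : ℤ) + 2 - ((i + 1 : ℕ) : ℤ)) ^ (ℓ + 1)
          = (- (c i * ((t : ℤ) + 1 - i) ^ (ℓ + 1)))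
            + c (i + 1) * ((t : ℤ) + 2 - ((i + 1 : ℕ) : ℤ)) ^ (ℓ + 1) := by
      intro i _
      have hb : (t : ℤ) + 2 - ((i + 1 : ℕ) : ℤ) = (t : ℤ) + 1 - i := by push_cast; ring
      rw [hb, show (ℓ + 2) = (ℓ + 1) + 1 by ring, Nat.choose_succ_succ]
      simp only [hc]
      push_cast
      ring
    rw [Finset.sum_congr rfl e1, Finset.sum_add_distrib, Finset.sum_neg_distrib]
    rw [← hS2', hS1']
    have h0 : (-1 : ℤ) ^ 0 * ((ℓ + 2).choose 0 : ℤ) * ((t : ℤ) + 2 - ((0:ℕ) : ℤ)) ^ (ℓ + 1)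
        = c 0 * ((t : ℤ) + 2 - ((0 : ℕ) : ℤ)) ^ (ℓ + 1) := by
      simp [hc]
    rw [h0]
    ring
  -- step 2: RHS pieces
  have hR1 : (t + 2 : ℤ) * eulerianNumber ℓ (t + 1) = T1 := by
    rw [eulerianNumber, hT1, Finset.mul_sum]
    apply Finset.sum_congr (by norm_num)
    intro i hi
    have hi' : i < t + 2 := by simpa using hi
    have h2 : ((t + 1 + 1 - i : ℕ) : ℤ) = (t : ℤ) + 2 - i := by
      push_cast [Nat.cast_sub (by omega : i ≤ t + 2)]; ring
    rw [h2]
  have hR2 : T2 = ((ℓ - t : ℕ) : ℤ) * eulerianNumber ℓ t := by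
    rw [hT2, Finset.sum_range_succ, eulerianNumber, Finset.mul_sum]
    have hlast : ((ℓ : ℤ) - t) * (c (t + 1) * ((t : ℤ) + 1 - ((t + 1 : ℕ) : ℤ)) ^ ℓ) = 0 := by
      rcases Nat.eq_or_lt_of_le ht with h | h
      · subst h; push_cast; ring
      · have hz : ((t : ℤ) + 1 - ((t + 1 : ℕ) : ℤ)) ^ ℓ = 0 := by
          push_cast
          rw [show (t:ℤ) + 1 - ((t:ℤ) + 1) = 0 by ring, zero_pow (by omega : ℓ ≠ 0)]
        rw [hz, mul_zero, mul_zero]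
    rw [hlast, add_zero]
    apply Finset.sum_congr rfl
    intro i hi
    have hi' : i < t + 1 := by simpa using hi
    have h2 : ((t + 1 - i : ℕ) : ℤ) = (t : ℤ) + 1 - i := by
      push_cast [Nat.cast_sub (by omega : i ≤ t + 1)]; ring
    rw [h2, Nat.cast_sub ht]
  rw [hL, hR1, ← hR2]
  -- step 3: reduce to U + V = 0
  have hUW : ∑ i ∈ range (t + 2), (-1 : ℤ) ^ i * ((i : ℤ) * ((ℓ + 1).choose i : ℤ))
        * ((t : ℤ) + 2 - i) ^ ℓ = -(((ℓ : ℤ) + 1) * W) := by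
    rw [Finset.sum_range_succ' _ (t + 1)]
    have e2 : ∀ i ∈ range (t + 1),
        (-1 : ℤ) ^ (i + 1) * (((i + 1 : ℕ) : ℤ) * ((ℓ + 1).choose (i + 1) : ℤ))
            * ((t : ℤ) + 2 - ((i + 1 : ℕ) : ℤ)) ^ ℓ
          = -(((ℓ : ℤ) + 1) * ((-1 : ℤ) ^ i * (ℓ.choose i : ℤ) * ((t : ℤ) + 1 - i) ^ ℓ)) := by
      intro i _
      have hb : (t : ℤ) + 2 - ((i + 1 : ℕ) : ℤ) = (t : ℤ) + 1 - i := by push_cast; ring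
      have hnat : (i + 1) * (ℓ + 1).choose (i + 1) = (ℓ + 1) * ℓ.choose i := by
        rw [mul_comm]
        exact (Nat.add_one_mul_choose_eq ℓ i).symm
      have hcast : ((i : ℤ) + 1) * ((ℓ + 1).choose (i + 1) : ℤ)
          = ((ℓ : ℤ) + 1) * (ℓ.choose i : ℤ) := by exact_mod_cast hnat
      rw [hb]
      push_cast
      rw [hcast]
      ring
    rw [Finset.sum_congr rfl e2, Finset.sum_neg_distrib, ← Finset.mul_sum, ← hW]
    simp
  have hVW : ∑ i ∈ range (t + 2), (-1 : ℤ) ^ i * ((((ℓ : ℤ) + 1) - i) * ((ℓ + 1).choose i : ℤ))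
        * ((t : ℤ) + 1 - i) ^ ℓ = ((ℓ : ℤ) + 1) * W := by
    have e3 : ∀ i ∈ range (t + 2), (-1 : ℤ) ^ i * ((((ℓ : ℤ) + 1) - i) * ((ℓ + 1).choose i : ℤ))
          * ((t : ℤ) + 1 - i) ^ ℓ
        = (-1 : ℤ) ^ i * (((ℓ : ℤ) + 1) * (ℓ.choose i : ℤ)) * ((t : ℤ) + 1 - i) ^ ℓ := by
      intro i hi
      have hi' : i ≤ t + 1 := by simpa [Nat.lt_succ_iff] using hi
      have hiℓ : i ≤ ℓ + 1 := le_trans hi' (by omega)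
      have hnat : (ℓ + 1).choose i * (ℓ + 1 - i) = (ℓ + 1) * ℓ.choose i := by
        rw [← Nat.choose_succ_right_eq, ← Nat.add_one_mul_choose_eq]
      have hcast : (((ℓ + 1 - i : ℕ)) : ℤ) = ((ℓ : ℤ) + 1) - i := by
        push_cast [Nat.cast_sub hiℓ]; ring
      have : (((ℓ : ℤ) + 1) - i) * ((ℓ + 1).choose i : ℤ) = ((ℓ : ℤ) + 1) * (ℓ.choose i : ℤ) := by
        rw [← hcast, mul_comm]
        exact_mod_cast hnat
      rw [this]
    rw [Finset.sum_congr rfl e3, Finset.sum_range_succ]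
    have hlast : (-1 : ℤ) ^ (t + 1) * (((ℓ : ℤ) + 1) * (ℓ.choose (t + 1) : ℤ))
        * ((t : ℤ) + 1 - ((t + 1 : ℕ) : ℤ)) ^ ℓ = 0 := by
      rcases Nat.eq_or_lt_of_le ht with h | h
      · subst h; simp [Nat.choose_succ_self]
      · have hz : ((t : ℤ) + 1 - ((t + 1 : ℕ) : ℤ)) ^ ℓ = 0 := by
          push_cast
          rw [show (t:ℤ) + 1 - ((t:ℤ) + 1) = 0 by ring, zero_pow (by omega : ℓ ≠ 0)]
        rw [hz, mul_zero]
    rw [hlast, add_zero, hW, Finset.mul_sum]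
    apply Finset.sum_congr rfl
    intro i _
    ring
  -- step 4: final algebra
  have expand : S1 - S2 - (T1 + T2)
      = -((∑ i ∈ range (t + 2), (-1 : ℤ) ^ i * ((i : ℤ) * ((ℓ + 1).choose i : ℤ))
            * ((t : ℤ) + 2 - i) ^ ℓ)
          + (∑ i ∈ range (t + 2), (-1 : ℤ) ^ i * ((((ℓ : ℤ) + 1) - i) * ((ℓ + 1).choose i : ℤ))
            * ((t : ℤ) + 1 - i) ^ ℓ)) := by
    rw [hS1, hS2, hT1, hT2, ← Finset.sum_sub_distrib, ← Finset.sum_add_distrib,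
      ← Finset.sum_add_distrib, ← Finset.sum_sub_distrib, ← Finset.sum_neg_distrib]
    apply Finset.sum_congr rfl
    intro i _
    simp only [hc]
    rw [pow_succ ((t : ℤ) + 2 - i) ℓ, pow_succ ((t : ℤ) + 1 - i) ℓ]
    ring
  have : S1 - S2 - (T1 + T2) = 0 := by
    rw [expand, hUW, hVW]
    ring
  linarith [this]

lemma n_mul_choose (n j ℓ : ℕ) (hj : j ≤ ℓ) :
    (n : ℤ) * ((n + j).choose ℓ : ℤ) =
      (j + 1 : ℤ) * ((n + j).choose (ℓ + 1) : ℤ)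
        + ((ℓ - j : ℕ) : ℤ) * ((n + j + 1).choose (ℓ + 1) : ℤ) := by
  have pascal : ((n + j + 1).choose (ℓ + 1) : ℤ)
      = ((n + j).choose (ℓ + 1) : ℤ) + ((n + j).choose ℓ : ℤ) := by
    push_cast [Nat.choose_succ_succ]
    ring
  have hkey : ((ℓ : ℤ) + 1) * ((n + j).choose (ℓ + 1) : ℤ)
      = ((n : ℤ) + j - ℓ) * ((n + j).choose ℓ : ℤ) := by
    rcases le_or_gt ℓ (n + j) with h | h
    · have h1 : (n + j).choose (ℓ + 1) * (ℓ + 1) = (n + j).choose ℓ * (n + j - ℓ) :=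
        Nat.choose_succ_right_eq (n + j) ℓ
      have h2 := congrArg (Nat.cast (R := ℤ)) h1
      push_cast [Nat.cast_sub h] at h2
      linarith [h2]
    · rw [Nat.choose_eq_zero_of_lt h, Nat.choose_eq_zero_of_lt (by omega)]
      simp
  have hcast : ((ℓ - j : ℕ) : ℤ) = (ℓ : ℤ) - j := by
    push_cast [Nat.cast_sub hj]; ring
  rw [pascal, hcast]
  have hmul : (n : ℤ) * ((n + j).choose ℓ : ℤ)
      = ((n : ℤ) + j - ℓ) * ((n + j).choose ℓ : ℤ)
        + ((ℓ : ℤ) - j) * ((n + j).choose ℓ : ℤ) := by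
    ring
  rw [hmul, ← hkey]
  ring

lemma worpitzky (ℓ n : ℕ) :
    (n : ℤ) ^ ℓ = ∑ j ∈ range (ℓ + 1), eulerianNumber ℓ j * ((n + j).choose ℓ : ℤ) := by
  induction ℓ with
  | zero => simp [eulerianNumber]
  | succ ℓ ih =>
    have step1 : (n : ℤ) ^ (ℓ + 1)
        = ∑ j ∈ range (ℓ + 1), eulerianNumber ℓ j * ((n : ℤ) * ((n + j).choose ℓ : ℤ)) := by
      rw [pow_succ, ih, Finset.sum_mul]
      apply Finset.sum_congr rfl
      intro j _
      ring
    rw [step1]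
    have step2 : ∀ j ∈ range (ℓ + 1),
        eulerianNumber ℓ j * ((n : ℤ) * ((n + j).choose ℓ : ℤ))
          = eulerianNumber ℓ j * ((j : ℤ) + 1) * ((n + j).choose (ℓ + 1) : ℤ)
            + eulerianNumber ℓ j * ((ℓ - j : ℕ) : ℤ) * ((n + j + 1).choose (ℓ + 1) : ℤ) := by
      intro j hj
      have hj' : j ≤ ℓ := by simpa [Nat.lt_succ_iff] using hj
      rw [n_mul_choose n j ℓ hj']
      ring
    have hA : ∑ j ∈ range (ℓ + 1),
          eulerianNumber ℓ j * ((j : ℤ) + 1) * ((n + j).choose (ℓ + 1) : ℤ)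
        = ∑ j ∈ range (ℓ + 2),
          eulerianNumber ℓ j * ((j : ℤ) + 1) * ((n + j).choose (ℓ + 1) : ℤ) := by
      rw [Finset.sum_range_succ _ (ℓ + 1), eulerian_top, zero_mul, zero_mul, add_zero]
    rw [Finset.sum_congr rfl step2, Finset.sum_add_distrib, hA,
      Finset.sum_range_succ'
        (fun j => eulerianNumber (ℓ + 1) j * ((n + j).choose (ℓ + 1) : ℤ)) (ℓ + 1),
      Finset.sum_range_succ'
        (fun j => eulerianNumber ℓ j * ((j : ℤ) + 1) * ((n + j).choose (ℓ + 1) : ℤ)) (ℓ + 1)]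
    have hrec : ∀ i ∈ range (ℓ + 1),
        eulerianNumber (ℓ + 1) (i + 1) * ((n + (i + 1)).choose (ℓ + 1) : ℤ)
          = eulerianNumber ℓ (i + 1) * (((i + 1 : ℕ) : ℤ) + 1) * ((n + (i + 1)).choose (ℓ + 1) : ℤ)
            + eulerianNumber ℓ i * ((ℓ - i : ℕ) : ℤ) * ((n + i + 1).choose (ℓ + 1) : ℤ) := by
      intro i hi
      have hi' : i ≤ ℓ := by simpa [Nat.lt_succ_iff] using hi
      rw [eulerian_rec ℓ i hi', show n + (i + 1) = n + i + 1 from by ring]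
      push_cast
      ring
    rw [Finset.sum_congr rfl hrec, Finset.sum_add_distrib]
    have hE0 : eulerianNumber (ℓ + 1) 0 = 1 := eulerian_zero_col (ℓ + 1)
    have hE0' : eulerianNumber ℓ 0 = 1 := eulerian_zero_col ℓ
    rw [hE0, hE0']
    have hsum2 : ∑ j ∈ range (ℓ + 1),
          eulerianNumber ℓ j * ((ℓ - j : ℕ) : ℤ) * ((n + j + 1).choose (ℓ + 1) : ℤ)
        = ∑ i ∈ range (ℓ + 1),
          eulerianNumber ℓ i * ((ℓ - i : ℕ) : ℤ) * ((n + i + 1).choose (ℓ + 1) : ℤ) := rfl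
    rw [hsum2]
    push_cast
    ring

lemma binom_diff (s ℓ n : ℕ) (h : s ≤ ℓ) :
    ∑ r ∈ range (s + 1), (-1 : ℤ) ^ r * (s.choose r : ℤ) * ((n + ℓ - r).choose (ℓ - r) : ℤ)
      = ((n + ℓ - s).choose ℓ : ℤ) := by
  induction s generalizing ℓ with
  | zero => simp
  | succ s ih =>
    have hs : s ≤ ℓ - 1 := by omega
    have hℓ : 1 ≤ ℓ := by omega
    rw [Finset.sum_range_succ']
    have e1 : ∀ i ∈ range (s + 1),
        (-1 : ℤ) ^ (i + 1) * ((s + 1).choose (i + 1) : ℤ)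
            * ((n + ℓ - (i + 1)).choose (ℓ - (i + 1)) : ℤ)
          = (-((-1 : ℤ) ^ i * (s.choose i : ℤ)
              * ((n + (ℓ - 1) - i).choose ((ℓ - 1) - i) : ℤ)))
            + (-1 : ℤ) ^ (i + 1) * (s.choose (i + 1) : ℤ)
              * ((n + ℓ - (i + 1)).choose (ℓ - (i + 1)) : ℤ) := by
      intro i hi
      have hi' : i ≤ s := by simpa [Nat.lt_succ_iff] using hi
      rw [Nat.choose_succ_succ s i,
        show n + ℓ - (i + 1) = n + (ℓ - 1) - i from by omega,
        show ℓ - (i + 1) = (ℓ - 1) - i from by omega]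
      push_cast
      ring
    rw [Finset.sum_congr rfl e1, Finset.sum_add_distrib, Finset.sum_neg_distrib]
    rw [ih (ℓ - 1) hs]
    have e2 : ∑ i ∈ range (s + 1),
        (-1 : ℤ) ^ (i + 1) * (s.choose (i + 1) : ℤ)
          * ((n + ℓ - (i + 1)).choose (ℓ - (i + 1)) : ℤ)
        = ((n + ℓ - s).choose ℓ : ℤ) - ((n + ℓ).choose ℓ : ℤ) := by
      have ihl := ih ℓ (by omega)
      rw [Finset.sum_range_succ' _ s] at ihl
      rw [Finset.sum_range_succ]
      simp only [Nat.choose_succ_self, Nat.cast_zero, mul_zero, zero_mul, add_zero]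
      simp only [pow_zero, Nat.choose_zero_right, Nat.cast_one, one_mul, Nat.sub_zero] at ihl
      linarith [ihl]
    rw [e2]
    have pascal : (n + ℓ - s).choose ℓ
        = (n + ℓ - (s + 1)).choose ℓ + (n + (ℓ - 1) - s).choose (ℓ - 1) := by
      have h1 : n + ℓ - s = (n + ℓ - (s + 1)) + 1 := by omega
      have h3 : n + (ℓ - 1) - s = n + ℓ - (s + 1) := by omega
      have h2 : ℓ = (ℓ - 1) + 1 := by omega
      calc (n + ℓ - s).choose ℓ = ((n + ℓ - (s + 1)) + 1).choose ((ℓ - 1) + 1) := by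
            rw [← h1, ← h2]
        _ = (n + ℓ - (s + 1)).choose (ℓ - 1) + (n + ℓ - (s + 1)).choose ((ℓ - 1) + 1) :=
            Nat.choose_succ_succ _ _
        _ = (n + ℓ - (s + 1)).choose ℓ + (n + (ℓ - 1) - s).choose (ℓ - 1) := by
            rw [← h2, h3]
            ring
    have pascalZ := congrArg (Nat.cast (R := ℤ)) pascal
    push_cast at pascalZ
    simp only [pow_zero, Nat.choose_zero_right, Nat.cast_one, one_mul, Nat.sub_zero]
    linarith [pascalZ]

lemma pow_eq_bCoeff_sum (ℓ n : ℕ) :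
    (n : ℤ) ^ ℓ = ∑ r ∈ range (ℓ + 1),
      (-1 : ℤ) ^ r * bCoeff ℓ r * ((n + ℓ - r).choose (ℓ - r) : ℤ) := by
  have hb : ∀ r ∈ range (ℓ + 1), (-1 : ℤ) ^ r * bCoeff ℓ r * ((n + ℓ - r).choose (ℓ - r) : ℤ)
      = ∑ j ∈ range (ℓ + 1), eulerianNumber ℓ j
          * ((-1 : ℤ) ^ r * (((ℓ - j).choose r : ℕ) : ℤ) * ((n + ℓ - r).choose (ℓ - r) : ℤ)) := by
    intro r hr
    have hr' : r ≤ ℓ := by simpa [Nat.lt_succ_iff] using hr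
    have hext : bCoeff ℓ r
        = ∑ j ∈ range (ℓ + 1), eulerianNumber ℓ j * (((ℓ - j).choose r : ℕ) : ℤ) := by
      rw [bCoeff]
      apply Finset.sum_subset
      · intro x hx
        rw [mem_range] at *
        omega
      · intro x hx hnx
        rw [mem_range] at hx hnx
        rw [Nat.choose_eq_zero_of_lt (by omega), Nat.cast_zero, mul_zero]
    rw [hext, Finset.mul_sum, Finset.sum_mul]
    apply Finset.sum_congr rfl
    intro j _
    ring
  rw [Finset.sum_congr rfl hb, Finset.sum_comm]
  have hswap : ∀ j ∈ range (ℓ + 1),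
      ∑ r ∈ range (ℓ + 1), eulerianNumber ℓ j
          * ((-1 : ℤ) ^ r * (((ℓ - j).choose r : ℕ) : ℤ) * ((n + ℓ - r).choose (ℓ - r) : ℤ))
        = eulerianNumber ℓ j * ((n + j).choose ℓ : ℤ) := by
    intro j hj
    have hj' : j ≤ ℓ := by simpa [Nat.lt_succ_iff] using hj
    rw [← Finset.mul_sum]
    congr 1
    have hshrink : ∑ r ∈ range (ℓ + 1),
          (-1 : ℤ) ^ r * (((ℓ - j).choose r : ℕ) : ℤ) * ((n + ℓ - r).choose (ℓ - r) : ℤ)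
        = ∑ r ∈ range ((ℓ - j) + 1),
          (-1 : ℤ) ^ r * (((ℓ - j).choose r : ℕ) : ℤ) * ((n + ℓ - r).choose (ℓ - r) : ℤ) := by
      symm
      apply Finset.sum_subset
      · intro x hx
        rw [mem_range] at *
        omega
      · intro x hx hnx
        rw [mem_range] at hx hnx
        rw [Nat.choose_eq_zero_of_lt (by omega), Nat.cast_zero, mul_zero, zero_mul]
    rw [hshrink, binom_diff (ℓ - j) ℓ n (by omega),
      show n + ℓ - (ℓ - j) = n + j from by omega]
  rw [Finset.sum_congr rfl hswap, ← worpitzky]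

lemma asc_expand (k n : ℕ) (a b : ℂ) :
    (ascPochhammer ℂ k).eval ((n : ℂ) * a + b)
      = ∑ ℓ ∈ range (k + 1), stirlingShift k ℓ b * a ^ ℓ * (n : ℂ) ^ ℓ := by
  have h1 : (ascPochhammer ℂ k).eval ((n : ℂ) * a + b)
      = (descPochhammer ℂ k).eval (((n : ℂ) * a + b) + k - 1) := by
    rw [descPochhammer_eval_eq_ascPochhammer]
    congr 1
    ring
  have hcoeff : ∀ m : ℕ, (descPochhammer ℂ k).coeff m
      = (((descPochhammer ℤ k).coeff m : ℤ) : ℂ) := by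
    intro m
    rw [← descPochhammer_map (Int.castRingHom ℂ) k, Polynomial.coeff_map]
    rfl
  have h2 : (descPochhammer ℂ k).eval (((n : ℂ) * a + b) + k - 1)
      = ∑ m ∈ range (k + 1), (((descPochhammer ℤ k).coeff m : ℤ) : ℂ)
          * ((((n : ℂ) * a) + (b + (k : ℂ) - 1)) ^ m) := by
    rw [Polynomial.eval_eq_sum_range'
      (by rw [descPochhammer_natDegree]; exact Nat.lt_succ_self k)]
    apply Finset.sum_congr rfl
    intro m _
    rw [hcoeff m]
    congr 1
    ring
  rw [h1, h2]
  have h3 : ∀ m ∈ range (k + 1),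
      (((descPochhammer ℤ k).coeff m : ℤ) : ℂ) * ((((n : ℂ) * a) + (b + (k : ℂ) - 1)) ^ m)
        = ∑ ℓ ∈ range (k + 1), (((descPochhammer ℤ k).coeff m : ℤ) : ℂ)
            * (((n : ℂ) * a) ^ ℓ * (b + (k : ℂ) - 1) ^ (m - ℓ) * (m.choose ℓ : ℂ)) := by
    intro m hm
    rw [add_pow, Finset.mul_sum]
    rw [mem_range, Nat.lt_succ_iff] at hm
    apply Finset.sum_subset
    · intro x hx
      rw [mem_range] at hx ⊢
      omega
    · intro x hx hnx
      rw [mem_range] at hx hnx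
      rw [Nat.choose_eq_zero_of_lt (by omega)]
      simp
  rw [Finset.sum_congr rfl h3, Finset.sum_comm]
  apply Finset.sum_congr rfl
  intro ℓ hℓ
  rw [mem_range, Nat.lt_succ_iff] at hℓ
  have h4 : ∑ m ∈ range (k + 1), (((descPochhammer ℤ k).coeff m : ℤ) : ℂ)
        * (((n : ℂ) * a) ^ ℓ * (b + (k : ℂ) - 1) ^ (m - ℓ) * (m.choose ℓ : ℂ))
      = ∑ m ∈ Icc ℓ k, (((descPochhammer ℤ k).coeff m : ℤ) : ℂ)
        * (((n : ℂ) * a) ^ ℓ * (b + (k : ℂ) - 1) ^ (m - ℓ) * (m.choose ℓ : ℂ)) := by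
    symm
    apply Finset.sum_subset
    · intro x hx
      rw [mem_Icc] at hx
      rw [mem_range]
      omega
    · intro x hx hnx
      rw [mem_range] at hx
      rw [mem_Icc] at hnx
      rw [Nat.choose_eq_zero_of_lt (by omega)]
      simp
  rw [h4, stirlingShift, Finset.sum_mul, Finset.sum_mul]
  apply Finset.sum_congr rfl
  intro m _
  rw [mul_pow]
  ring

lemma stirlingShift_eq_zero {k m : ℕ} (h : k < m) (b : ℂ) : stirlingShift k m b = 0 := by
  rw [stirlingShift, Finset.Icc_eq_empty (by omega)]
  simp

lemma bCoeff_eq_zero {ℓ r : ℕ} (h : ℓ < r) : bCoeff ℓ r = 0 := by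
  rw [bCoeff, Nat.sub_eq_zero_of_le (le_of_lt h)]
  simp [eulerian_zero_col, Nat.choose_eq_zero_of_lt h]

lemma key_identity (k : ℕ) (a b : ℂ) (n : ℕ) :
    (ascPochhammer ℂ k).eval ((n : ℂ) * a + b)
      = ∑ q ∈ range (k + 1), gCoeff k q a b * (((n + q).choose q : ℕ) : ℂ) := by
  set F : ℕ → ℕ → ℂ := fun ℓ r => stirlingShift k ℓ b * a ^ ℓ *
    ((-1 : ℂ) ^ r * ((bCoeff ℓ r : ℤ) : ℂ) * (((n + ℓ - r).choose (ℓ - r) : ℕ) : ℂ)) with hF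
  have powC : ∀ ℓ : ℕ, ((n : ℂ)) ^ ℓ = ∑ r ∈ range (ℓ + 1),
      (-1 : ℂ) ^ r * ((bCoeff ℓ r : ℤ) : ℂ) * (((n + ℓ - r).choose (ℓ - r) : ℕ) : ℂ) := by
    intro ℓ
    exact_mod_cast congrArg (Int.cast (R := ℂ)) (pow_eq_bCoeff_sum ℓ n)
  rw [asc_expand]
  have h1 : ∀ ℓ ∈ range (k + 1),
      stirlingShift k ℓ b * a ^ ℓ * (n : ℂ) ^ ℓ = ∑ r ∈ range (k + 1), F ℓ r := by
    intro ℓ _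
    rw [powC ℓ, Finset.mul_sum]
    apply Finset.sum_subset
    · intro x hx
      rw [mem_range] at *
      omega
    · intro x hx hnx
      rw [mem_range] at hx hnx
      rw [bCoeff_eq_zero (by omega)]
      simp
  rw [Finset.sum_congr rfl h1, Finset.sum_comm]
  have h2 : ∀ p ∈ range (k + 1),
      ∑ ℓ ∈ range (k + 1), F ℓ p = ∑ q ∈ range (k + 1 - p), F (p + q) p := by
    intro p hp
    rw [mem_range, Nat.lt_succ_iff] at hp
    rw [← Finset.sum_Ico_eq_sum_range (f := fun ℓ => F ℓ p) (m := p) (n := k + 1)]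
    symm
    apply Finset.sum_subset
    · intro x hx
      rw [mem_Ico] at hx
      rw [mem_range]
      omega
    · intro x hx hnx
      rw [mem_range] at hx
      rw [mem_Ico] at hnx
      show stirlingShift k x b * a ^ x * ((-1 : ℂ) ^ p * ((bCoeff x p : ℤ) : ℂ)
        * (((n + x - p).choose (x - p) : ℕ) : ℂ)) = 0
      rw [bCoeff_eq_zero (by omega)]
      simp
  rw [Finset.sum_congr rfl h2]
  -- now the target side
  have h3 : ∀ q ∈ range (k + 1),
      gCoeff k q a b * (((n + q).choose q : ℕ) : ℂ) = ∑ p ∈ range (k + 1), (if p + q ≤ k then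
        ((-1 : ℂ) ^ p * stirlingShift k (p + q) b * (bCoeff (p + q) p : ℂ) * a ^ (p + q))
          * (((n + q).choose q : ℕ) : ℂ) else 0) := by
    intro q hq
    rw [mem_range, Nat.lt_succ_iff] at hq
    rw [gCoeff, Finset.sum_mul]
    symm
    rw [← Finset.sum_filter]
    apply Finset.sum_congr
    · ext x
      simp only [mem_filter, mem_range]
      omega
    · intro x _
      rfl
  rw [Finset.sum_congr rfl h3, Finset.sum_comm]
  apply Finset.sum_congr rfl
  intro p hp
  rw [mem_range, Nat.lt_succ_iff] at hp
  have h4 : ∑ q ∈ range (k + 1), (if p + q ≤ k then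
        ((-1 : ℂ) ^ p * stirlingShift k (p + q) b * (bCoeff (p + q) p : ℂ) * a ^ (p + q))
          * (((n + q).choose q : ℕ) : ℂ) else 0)
      = ∑ q ∈ range (k + 1 - p), ((-1 : ℂ) ^ p * stirlingShift k (p + q) b
          * (bCoeff (p + q) p : ℂ) * a ^ (p + q)) * (((n + q).choose q : ℕ) : ℂ) := by
    rw [← Finset.sum_filter]
    apply Finset.sum_congr
    · ext x
      simp only [mem_filter, mem_range]
      omega
    · intro x _
      rfl
  rw [h4]
  symm
  apply Finset.sum_congr rfl
  intro q hq
  rw [mem_range] at hq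
  show (-1 : ℂ) ^ p * stirlingShift k (p + q) b * ((bCoeff (p + q) p : ℤ) : ℂ) * a ^ (p + q)
      * (((n + q).choose q : ℕ) : ℂ)
    = stirlingShift k (p + q) b * a ^ (p + q) * ((-1 : ℂ) ^ p * ((bCoeff (p + q) p : ℤ) : ℂ)
      * (((n + (p + q) - p).choose (p + q - p) : ℕ) : ℂ))
  rw [show n + (p + q) - p = n + q from by omega, show p + q - p = q from by omega]
  ring

/-- `Σ_{ν=-∞}^{∞} (|ν|a+b)_k z^{|ν|} = -(b)_k + 2 Σ_{q=0}^k g(k,q;a,b) (1-z)^{-q-1}`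
for `|z| < 1`. -/
theorem bilateral_pochhammer_sum (k : ℕ) (a b : ℂ) (z : ℂ) (hz : ‖z‖ < 1) :
    HasSum (fun ν : ℤ =>
        (ascPochhammer ℂ k).eval ((ν.natAbs : ℂ) * a + b) * z ^ ν.natAbs)
      (-(ascPochhammer ℂ k).eval b +
        2 * ∑ q ∈ Finset.range (k + 1), gCoeff k q a b * (1 - z) ^ (-(q : ℤ) - 1)) := by
  have hz' : ‖z‖ < 1 := hz
  have hz1 : (1 : ℂ) - z ≠ 0 := by
    intro h
    have : z = 1 := by linear_combination -h
    rw [this] at hz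
    simp at hz
  set f : ℕ → ℂ := fun n => (ascPochhammer ℂ k).eval ((n : ℂ) * a + b) * z ^ n with hfdef
  set S : ℂ := ∑ q ∈ Finset.range (k + 1), gCoeff k q a b * (1 - z) ^ (-(q : ℤ) - 1) with hS
  have hzpow : ∀ q : ℕ, (1 - z) ^ (-(q : ℤ) - 1) = 1 / (1 - z) ^ (q + 1) := by
    intro q
    rw [show -(q : ℤ) - 1 = -((q + 1 : ℕ) : ℤ) from by push_cast; ring,
      zpow_neg, zpow_natCast, one_div]
  have hf : HasSum f S := by
    have hterm : ∀ q ∈ Finset.range (k + 1),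
        HasSum (fun n : ℕ => gCoeff k q a b * ((((n + q).choose q : ℕ) : ℂ) * z ^ n))
          (gCoeff k q a b * (1 - z) ^ (-(q : ℤ) - 1)) := by
      intro q _
      rw [hzpow q]
      exact (hasSum_choose_mul_geometric_of_norm_lt_one q hz').mul_left _
    have hsum := hasSum_sum hterm
    have hfun : (fun n : ℕ => ∑ q ∈ Finset.range (k + 1),
        gCoeff k q a b * ((((n + q).choose q : ℕ) : ℂ) * z ^ n)) = f := by
      funext n
      rw [hfdef]
      simp only
      rw [key_identity k a b n, Finset.sum_mul]
      apply Finset.sum_congr rfl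
      intro q _
      ring
    rwa [hfun] at hsum
  have hshift : HasSum (fun n : ℕ => f (n + 1)) (S - f 0) := by
    rw [hasSum_nat_add_iff 1]
    simpa using hf
  have htot : HasSum (Int.rec f (fun n => f (n + 1)) : ℤ → ℂ) (S + (S - f 0)) :=
    hf.int_rec hshift
  have hfun2 : (fun ν : ℤ =>
      (ascPochhammer ℂ k).eval ((ν.natAbs : ℂ) * a + b) * z ^ ν.natAbs)
      = (Int.rec f (fun n => f (n + 1)) : ℤ → ℂ) := by
    funext ν
    cases ν <;> rfl
  rw [hfun2]
  have hval : S + (S - f 0) = -(ascPochhammer ℂ k).eval b + 2 * S := by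
    have hf0 : f 0 = (ascPochhammer ℂ k).eval b := by
      rw [hfdef]
      simp
    rw [hf0]
    ring
  rwa [hval] at htot
end

section
/- For a positive integer q, the numbers G(n,n,q) defined by G(n,ℓ,q) = Σ_{k=1}^{n} [(-1)^{n-k}(q)_k/(k!(n+k)!)]·H_{ℓ+k}(n,k), where H_{n+k}(n,k) = (k!(n+k)!/n!)·B_{n,k}(1/2,1/3,1/4,…), satisfy the generating function relation Σ_{n=1}^{∞} (-1)^n G(n,n,q)·x^n = (x/(e^x − 1))^{q} − 1. -/
open Finset PowerSeries Polynomial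

noncomputable def Fser (q : ℕ) : PowerSeries ℝ :=
  PowerSeries.mk fun k => (-1 : ℝ) ^ k * (ascPochhammer ℝ k).eval (q : ℝ) / (k.factorial : ℝ)

lemma Fser_step (q : ℕ) : Fser (q + 1) * (1 + PowerSeries.X) = Fser q := by
  ext n
  rw [mul_add, mul_one, map_add]
  cases n with
  | zero =>
    rw [PowerSeries.coeff_zero_mul_X]
    simp [Fser]
  | succ m =>
    rw [PowerSeries.coeff_succ_mul_X]
    simp only [Fser, PowerSeries.coeff_mk]
    have h1 : (ascPochhammer ℝ (m+1)).eval ((q:ℝ)+1) =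
        (ascPochhammer ℝ m).eval ((q:ℝ)+1) * ((q:ℝ)+1+m) := ascPochhammer_succ_eval m _
    have h2 : (ascPochhammer ℝ (m+1)).eval (q:ℝ) =
        (q:ℝ) * (ascPochhammer ℝ m).eval ((q:ℝ)+1) := by
      rw [ascPochhammer_succ_left]
      simp [eval_comp]
    push_cast
    rw [h1, h2, Nat.factorial_succ]
    have hm : (m.factorial : ℝ) ≠ 0 := Nat.cast_ne_zero.2 m.factorial_ne_zero
    push_cast
    field_simp
    ring

lemma Fser_zero : Fser 0 = 1 := by
  ext n
  simp [Fser, PowerSeries.coeff_one, ascPochhammer_eval_zero]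
  split_ifs with h
  · simp [h]
  · simp

lemma Fser_mul (q : ℕ) : Fser q * (1 + PowerSeries.X) ^ q = 1 := by
  induction q with
  | zero => rw [pow_zero, mul_one, Fser_zero]
  | succ q ih =>
    rw [pow_succ, show Fser (q+1) * ((1 + PowerSeries.X) ^ q * (1 + PowerSeries.X))
        = (Fser (q+1) * (1 + PowerSeries.X)) * (1 + PowerSeries.X) ^ q by ring,
      Fser_step, ih]

/-- For the partial Bell polynomials `B n k = B_{n,k}(1/2, 1/3, 1/4, …)` (characterized by the
generating relation `Σ_n B_{n,k} tⁿ/n! = (1/k!)(Σ_{m≥1} tᵐ/((m+1)·m!))ᵏ`), the numbers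
`G(n,n,q) = Σ_{k=1}^n (-1)^{n-k} (q)_k/(k!(n+k)!) · H_{n+k}(n,k)` with
`H_{n+k}(n,k) = (k!(n+k)!/n!)·B_{n,k}(1/2,1/3,…)` satisfy
`Σ_{n≥1} (-1)ⁿ G(n,n,q) xⁿ = (x/(eˣ-1))^q − 1` as a power-series identity, where
`(eˣ-1)/x` is the power series `Σ_n xⁿ/(n+1)!`. -/
theorem generating_function_G (q : ℕ) (hq : 0 < q)
    (B : ℕ → ℕ → ℝ)
    (hB : ∀ j : ℕ,
      (PowerSeries.mk fun i : ℕ => B i j / (i.factorial : ℝ)) =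
        ((j.factorial : ℝ))⁻¹ •
          (PowerSeries.mk fun m : ℕ =>
            if m = 0 then (0 : ℝ) else (1 / ((m : ℝ) + 1)) / (m.factorial : ℝ)) ^ j)
    (G : ℕ → ℝ)
    (hG : ∀ n : ℕ,
      G n = ∑ k ∈ Finset.Icc 1 n,
        (-1 : ℝ) ^ (n - k) * (ascPochhammer ℝ k).eval (q : ℝ) /
            ((k.factorial : ℝ) * ((n + k).factorial : ℝ)) *
          (((k.factorial : ℝ) * ((n + k).factorial : ℝ) / (n.factorial : ℝ)) * B n k)) :
    (PowerSeries.mk fun n : ℕ => if n = 0 then (0 : ℝ) else (-1 : ℝ) ^ n * G n) =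
      ((PowerSeries.mk fun n : ℕ => (1 : ℝ) / ((n + 1).factorial : ℝ))⁻¹) ^ q - 1 := by
  set Y : PowerSeries ℝ := PowerSeries.mk fun m : ℕ =>
    if m = 0 then (0 : ℝ) else (1 / ((m : ℝ) + 1)) / (m.factorial : ℝ) with hYdef
  set E : PowerSeries ℝ := PowerSeries.mk fun n : ℕ => (1 : ℝ) / ((n + 1).factorial : ℝ) with hEdef
  set f : ℕ → ℝ := fun k => (-1 : ℝ) ^ k * (ascPochhammer ℝ k).eval (q : ℝ) / (k.factorial : ℝ)
    with hfdef
  set T : PowerSeries ℝ := PowerSeries.mk fun n : ℕ =>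
    if n = 0 then (1 : ℝ) else (-1 : ℝ) ^ n * G n with hTdef
  have hEY : E = 1 + Y := by
    ext n
    rw [map_add, PowerSeries.coeff_one]
    cases n with
    | zero => simp [hEdef, hYdef]
    | succ m =>
      simp only [hEdef, hYdef, PowerSeries.coeff_mk, Nat.succ_ne_zero, if_false, if_neg,
        zero_add]
      rw [show m + 1 + 1 = (m + 1) + 1 from rfl, Nat.factorial_succ]
      push_cast
      have : ((m.factorial : ℝ)) ≠ 0 := Nat.cast_ne_zero.2 m.factorial_ne_zero
      field_simp
  have hYc : PowerSeries.constantCoeff Y = 0 := by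
    simp [hYdef, ← PowerSeries.coeff_zero_eq_constantCoeff]
  have hYpow : ∀ n k : ℕ, n < k → PowerSeries.coeff n (Y ^ k) = 0 := by
    intro n k h
    have hdvd : (PowerSeries.X : PowerSeries ℝ) ^ k ∣ Y ^ k :=
      pow_dvd_pow_of_dvd (PowerSeries.X_dvd_iff.2 hYc) k
    exact PowerSeries.X_pow_dvd_iff.1 hdvd n h
  -- coefficients of T as finite sums in powers of Y
  have hBc : ∀ n k : ℕ, B n k / (n.factorial : ℝ) = PowerSeries.coeff n (Y ^ k) / (k.factorial : ℝ) := by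
    intro n k
    have := congrArg (PowerSeries.coeff n) (hB k)
    rw [PowerSeries.coeff_mk, map_smul, smul_eq_mul] at this
    rw [this]; ring
  have hTA : ∀ N i : ℕ, i ≤ N →
      PowerSeries.coeff i T = ∑ k ∈ range (N + 1), f k * PowerSeries.coeff i (Y ^ k) := by
    intro N i hi
    have hshrink : ∑ k ∈ range (N + 1), f k * PowerSeries.coeff i (Y ^ k)
        = ∑ k ∈ range (i + 1), f k * PowerSeries.coeff i (Y ^ k) := by
      refine (Finset.sum_subset (Finset.range_subset_range.2 (by omega)) ?_).symm
      intro k hk hk'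
      simp only [Finset.mem_range] at hk hk'
      rw [hYpow i k (by omega), mul_zero]
    rw [hshrink]
    cases i with
    | zero =>
      simp [hTdef, hfdef]
    | succ m =>
      rw [hTdef, PowerSeries.coeff_mk, if_neg (Nat.succ_ne_zero m), hG (m + 1), mul_sum]
      rw [Finset.range_eq_Ico, Finset.sum_eq_sum_Ico_succ_bot (Nat.succ_pos _),
        Nat.succ_eq_add_one, Finset.Ico_add_one_right_eq_Icc]
      have h0 : f 0 * PowerSeries.coeff (m + 1) (Y ^ 0) = 0 := by
        rw [pow_zero, PowerSeries.coeff_one, if_neg (Nat.succ_ne_zero m), mul_zero]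
      rw [h0, zero_add]
      refine Finset.sum_congr rfl fun k hk => ?_
      simp only [Finset.mem_Icc] at hk
      have hk1 : (k.factorial : ℝ) ≠ 0 := Nat.cast_ne_zero.2 k.factorial_ne_zero
      have hk2 : (((m + 1) + k).factorial : ℝ) ≠ 0 := Nat.cast_ne_zero.2 (Nat.factorial_ne_zero _)
      have hsign : (-1 : ℝ) ^ (m + 1) * (-1 : ℝ) ^ (m + 1 - k) = (-1 : ℝ) ^ k := by
        rw [← pow_add]
        have he : m + 1 + (m + 1 - k) = 2 * (m + 1 - k) + k := by omega
        rw [he, pow_add, pow_mul, neg_one_sq, one_pow, one_mul]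
      have hB' : B (m + 1) k / ((m + 1).factorial : ℝ)
          = PowerSeries.coeff (m + 1) (Y ^ k) / (k.factorial : ℝ) := hBc (m + 1) k
      rw [hfdef]
      simp only []
      rw [show (-1 : ℝ) ^ (m + 1) *
          ((-1) ^ (m + 1 - k) * (ascPochhammer ℝ k).eval (q : ℝ) /
              ((k.factorial : ℝ) * (((m + 1) + k).factorial : ℝ)) *
            (((k.factorial : ℝ) * (((m + 1) + k).factorial : ℝ) / ((m + 1).factorial : ℝ)) *
              B (m + 1) k))
          = ((-1 : ℝ) ^ (m + 1) * (-1 : ℝ) ^ (m + 1 - k)) * (ascPochhammer ℝ k).eval (q : ℝ) *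
              (B (m + 1) k / ((m + 1).factorial : ℝ)) from by field_simp]
      rw [hsign, hB']
      ring
  -- polynomial (1+X)^q
  set p : Polynomial ℝ := (1 + Polynomial.X) ^ q with hpdef
  have hpc : (p : PowerSeries ℝ) = (1 + PowerSeries.X) ^ q := by
    rw [hpdef, Polynomial.coe_pow, Polynomial.coe_add, Polynomial.coe_one, Polynomial.coe_X]
  have hdegp : p.natDegree ≤ q := by
    refine le_trans (Polynomial.natDegree_pow_le) ?_
    have : (1 + Polynomial.X : Polynomial ℝ).natDegree ≤ 1 :=
      le_trans (Polynomial.natDegree_add_le _ _) (by simp)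
    calc q * (1 + Polynomial.X : Polynomial ℝ).natDegree ≤ q * 1 := by
          exact Nat.mul_le_mul_left q this
      _ = q := mul_one q
  have hbz : ∀ j : ℕ, q < j → p.coeff j = 0 := fun j hj =>
    Polynomial.coeff_eq_zero_of_natDegree_lt (lt_of_le_of_lt hdegp hj)
  have hC : ∀ m : ℕ, ∑ ij ∈ antidiagonal m, f ij.1 * p.coeff ij.2 =
      if m = 0 then (1 : ℝ) else 0 := by
    intro m
    have h := congrArg (PowerSeries.coeff m) (Fser_mul q)
    rw [PowerSeries.coeff_mul, PowerSeries.coeff_one] at h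
    rw [← h]
    refine Finset.sum_congr rfl fun ij _ => ?_
    congr 1
    · simp [Fser, hfdef]
    · rw [← hpc, Polynomial.coeff_coe]
  have hQ : (1 + Y) ^ q = ∑ j ∈ range (q + 1), p.coeff j • Y ^ j := by
    have := Polynomial.aeval_eq_sum_range' (lt_of_le_of_lt hdegp (Nat.lt_succ_self q)) Y
    rw [hpdef] at this ⊢
    rw [← this]
    simp [map_pow]
  -- the key multiplication identity
  have hmain : T * (1 + Y) ^ q = 1 := by
    ext n
    rw [PowerSeries.coeff_mul]
    have step1 : ∀ il ∈ antidiagonal n,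
        PowerSeries.coeff il.1 T * PowerSeries.coeff il.2 ((1 + Y) ^ q)
        = ∑ k ∈ range (n + 1),
            f k * (PowerSeries.coeff il.1 (Y ^ k) * PowerSeries.coeff il.2 ((1 + Y) ^ q)) := by
      intro il hil
      rw [hTA n il.1 (Finset.HasAntidiagonal.antidiagonal.fst_le hil), Finset.sum_mul]
      exact Finset.sum_congr rfl fun k _ => by ring
    rw [Finset.sum_congr rfl step1, Finset.sum_comm]
    have step2 : ∀ k : ℕ, ∑ il ∈ antidiagonal n,
        f k * (PowerSeries.coeff il.1 (Y ^ k) * PowerSeries.coeff il.2 ((1 + Y) ^ q))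
        = ∑ j ∈ range (q + 1), f k * (p.coeff j * PowerSeries.coeff n (Y ^ (k + j))) := by
      intro k
      rw [← Finset.mul_sum, ← PowerSeries.coeff_mul, hQ, Finset.mul_sum, map_sum,
        Finset.mul_sum]
      refine Finset.sum_congr rfl fun j _ => ?_
      rw [mul_smul_comm, ← pow_add, map_smul, smul_eq_mul]
    rw [Finset.sum_congr rfl fun k _ => step2 k]
    -- the combinatorial reindexing
    rw [← Finset.sum_product']
    set g : ℕ × ℕ → ℝ :=
      fun kj => f kj.1 * (p.coeff kj.2 * PowerSeries.coeff n (Y ^ (kj.1 + kj.2))) with hgdef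
    have hg0 : ∀ kj : ℕ × ℕ, n < kj.1 + kj.2 → g kj = 0 := by
      intro kj h
      simp only [hgdef]
      rw [hYpow n _ h, mul_zero, mul_zero]
    have hg0' : ∀ kj : ℕ × ℕ, q < kj.2 → g kj = 0 := by
      intro kj h
      simp only [hgdef]
      rw [hbz _ h, zero_mul, mul_zero]
    set D : Finset (ℕ × ℕ) :=
      (range (n + 1) ×ˢ range (n + 1)).filter (fun kj => kj.1 + kj.2 ≤ n) with hDdef
    have h1a : ∑ kj ∈ range (n + 1) ×ˢ range (q + 1), g kj
        = ∑ kj ∈ (range (n + 1) ×ˢ range (q + 1)).filter (fun kj => kj.1 + kj.2 ≤ n), g kj :=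
      (Finset.sum_filter_of_ne (fun x _ hx => by
        by_contra hc
        exact hx (hg0 x (by omega)))).symm
    have h1b : ∑ kj ∈ D, g kj = ∑ kj ∈ D.filter (fun kj => kj.2 ≤ q), g kj :=
      (Finset.sum_filter_of_ne (fun x _ hx => by
        by_contra hc
        exact hx (hg0' x (by omega)))).symm
    have h1c : (range (n + 1) ×ˢ range (q + 1)).filter (fun kj => kj.1 + kj.2 ≤ n)
        = D.filter (fun kj => kj.2 ≤ q) := by
      ext kj
      simp only [hDdef, Finset.mem_filter, Finset.mem_product, Finset.mem_range]
      omega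
    have h2 : D = (range (n + 1)).biUnion (fun m => antidiagonal m) := by
      ext kj
      simp only [hDdef, Finset.mem_filter, Finset.mem_product, Finset.mem_range,
        Finset.mem_biUnion, Finset.HasAntidiagonal.mem_antidiagonal]
      constructor
      · rintro ⟨⟨-, -⟩, hle⟩
        exact ⟨kj.1 + kj.2, by omega, rfl⟩
      · rintro ⟨m, hm, hkj⟩
        omega
    have h3 : ∑ kj ∈ D, g kj = ∑ m ∈ range (n + 1), ∑ kj ∈ antidiagonal m, g kj := by
      rw [h2]
      refine Finset.sum_biUnion ?_
      intro m1 _ m2 _ hne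
      refine Finset.disjoint_left.2 fun a ha1 ha2 => hne ?_
      exact (Finset.HasAntidiagonal.mem_antidiagonal.1 ha1).symm.trans (Finset.HasAntidiagonal.mem_antidiagonal.1 ha2)
    have h4 : ∀ m ∈ range (n + 1), ∑ kj ∈ antidiagonal m, g kj
        = (if m = 0 then (1 : ℝ) else 0) * PowerSeries.coeff n (Y ^ m) := by
      intro m _
      have : ∑ kj ∈ antidiagonal m, g kj
          = ∑ kj ∈ antidiagonal m, f kj.1 * p.coeff kj.2 * PowerSeries.coeff n (Y ^ m) := by
        refine Finset.sum_congr rfl fun kj hkj => ?_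
        rw [hgdef]
        simp only []
        rw [Finset.HasAntidiagonal.mem_antidiagonal.1 hkj]
        ring
      rw [this, ← Finset.sum_mul, hC m]
    rw [h1a, h1c, ← h1b, h3, Finset.sum_congr rfl h4]
    rw [Finset.sum_eq_single_of_mem 0 (Finset.mem_range.2 (Nat.succ_pos n))
      (fun b _ hb => by rw [if_neg hb, zero_mul])]
    rw [if_pos rfl, one_mul, pow_zero]
  -- conclude
  have hE0 : PowerSeries.constantCoeff E ≠ 0 := by
    simp [hEdef, ← PowerSeries.coeff_zero_eq_constantCoeff]
  have hmainE : T * E ^ q = 1 := by rw [hEY]; exact hmain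
  have hTinv : T = (E⁻¹) ^ q := by
    have h2 : (E⁻¹) ^ q * E ^ q = 1 := by
      rw [← mul_pow, PowerSeries.inv_mul_cancel E hE0, one_pow]
    calc T = T * ((E⁻¹) ^ q * E ^ q) := by rw [h2, mul_one]
      _ = (T * E ^ q) * (E⁻¹) ^ q := by ring
      _ = (E⁻¹) ^ q := by rw [hmainE, one_mul]
  rw [← hTinv]
  ext n
  rw [map_sub, PowerSeries.coeff_one]
  cases n with
  | zero => simp [hTdef]
  | succ m => simp [hTdef]
end
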